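/- arXiv:1306.5506 — 5 statements merged into one kernel-verified Lean document; each statement's English description precedes it below -/
import Mathlib

section
/- Let X and Y be disjoint closed subsets of the Riemann sphere, and let x, y be points not in X ∪ Y. If x and y lie in the same connected component of the complement of X and in the same connected component of the complement of Y, then x and y lie in the same connected component of the complement of X ∪ Y. -/
open OnePoint

open Complex Set Filter Metric Bornology Topology

noncomputable section

local notation "ℂ∞" => OnePoint ℂ

/-- Existence of a continuous logarithm of `f` on `K`. -/
def HasContLog (K : Set ℂ) (f : ℂ → ℂ) : Prop :=
  ∃ g : ℂ → ℂ, ContinuousOn g K ∧ ∀ z ∈ K, Complex.exp (g z) = f z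

lemma near_one_mem_slitPlane {u : ℂ} (h : ‖u - 1‖ < 1) : u ∈ Complex.slitPlane := by
  rw [Complex.mem_slitPlane_iff]
  left
  have h2 : |(u - 1).re| ≤ ‖u - 1‖ := by
    simpa using Complex.abs_re_le_norm (u - 1)
  have h3 : (u - 1).re = u.re - 1 := by simp
  rw [h3] at h2
  have := abs_lt.mp (lt_of_le_of_lt h2 h)
  linarith [this.1]

lemma HasContLog.congr_ratio {K : Set ℂ} {f₁ f₂ : ℂ → ℂ} (h : HasContLog K f₁)
    (hf₂ : ContinuousOn f₂ K)
    (hclose : ∀ z ∈ K, ‖f₂ z - f₁ z‖ < ‖f₁ z‖) : HasContLog K f₂ := by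
  obtain ⟨g, hg, hge⟩ := h
  have hf₁ : ContinuousOn f₁ K := by
    have : ContinuousOn (fun z => Complex.exp (g z)) K := hg.cexp
    exact this.congr fun z hz => (hge z hz).symm
  have h1 : ∀ z ∈ K, f₁ z ≠ 0 := fun z hz => by
    rw [← hge z hz]; exact Complex.exp_ne_zero _
  have hsp : ∀ z ∈ K, f₂ z / f₁ z ∈ Complex.slitPlane := by
    intro z hz
    apply near_one_mem_slitPlane
    rw [div_sub_one (h1 z hz), norm_div, div_lt_one (norm_pos_iff.mpr (h1 z hz))]
    exact hclose z hz
  have h2 : ∀ z ∈ K, f₂ z ≠ 0 := by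
    intro z hz h0
    have := hclose z hz
    rw [h0, zero_sub, norm_neg] at this
    exact lt_irrefl _ this
  refine ⟨fun z => g z + Complex.log (f₂ z / f₁ z), hg.add ((hf₂.div hf₁ h1).clog hsp), ?_⟩
  intro z hz
  rw [Complex.exp_add, hge z hz, Complex.exp_log (div_ne_zero (h2 z hz) (h1 z hz))]
  field_simp [h1 z hz]

lemma clopen_transfer {K : Set ℂ} (hK : IsCompact K) (hne : K.Nonempty) (P : ℂ → Prop)
    (hloc : ∀ a ∉ K, ∀ a' ∉ K, dist a' a < infDist a K / 2 → (P a ↔ P a'))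
    {a b : ℂ} (hb : b ∈ connectedComponentIn Kᶜ a) (hPb : P b) : P a := by
  have dpos : ∀ c, c ∉ K → 0 < infDist c K := fun c hc =>
    (hK.isClosed.notMem_iff_infDist_pos hne).mp hc
  set A : Set ℂ := ⋃ c ∈ {c | c ∉ K ∧ P c}, ball c (infDist c K / 4) with hA
  set B : Set ℂ := ⋃ c ∈ {c | c ∉ K ∧ ¬ P c}, ball c (infDist c K / 4) with hB
  have hAo : IsOpen A := isOpen_biUnion fun _ _ => isOpen_ball
  have hBo : IsOpen B := isOpen_biUnion fun _ _ => isOpen_ball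
  have hd : Disjoint A B := by
    rw [Set.disjoint_left]
    rintro z hzA hzB
    simp only [hA, hB, mem_iUnion, mem_setOf_eq] at hzA hzB
    obtain ⟨c₁, ⟨hc₁K, hc₁P⟩, hz₁⟩ := hzA
    obtain ⟨c₂, ⟨hc₂K, hc₂P⟩, hz₂⟩ := hzB
    rw [mem_ball] at hz₁ hz₂
    rcases le_total (infDist c₁ K) (infDist c₂ K) with hle | hle
    · have ht : dist c₁ c₂ < infDist c₂ K / 2 := by
        have t := dist_triangle c₁ z c₂
        have e1 : dist c₁ z = dist z c₁ := dist_comm _ _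
        linarith
      exact hc₂P ((hloc c₂ hc₂K c₁ hc₁K ht).mpr hc₁P)
    · have ht : dist c₂ c₁ < infDist c₁ K / 2 := by
        have t := dist_triangle c₂ z c₁
        have e1 : dist c₂ z = dist z c₂ := dist_comm _ _
        have e2 : dist c₁ z = dist z c₁ := dist_comm _ _
        linarith
      exact hc₂P ((hloc c₁ hc₁K c₂ hc₂K ht).mp hc₁P)
  have hcov : Kᶜ ⊆ A ∪ B := by
    intro c hc
    by_cases hPc : P c
    · exact Or.inl (mem_biUnion ⟨hc, hPc⟩ (mem_ball_self (by linarith [dpos c hc])))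
    · exact Or.inr (mem_biUnion ⟨hc, hPc⟩ (mem_ball_self (by linarith [dpos c hc])))
  have haK : a ∈ Kᶜ := connectedComponentIn_nonempty_iff.mp ⟨b, hb⟩
  have hbK : b ∈ Kᶜ := connectedComponentIn_subset _ _ hb
  have hsub := (isPreconnected_connectedComponentIn (x := a) (F := Kᶜ)).subset_or_subset hAo hBo hd
    ((connectedComponentIn_subset _ _).trans hcov)
  have hbA : b ∈ A := mem_biUnion ⟨hbK, hPb⟩ (mem_ball_self (by linarith [dpos b hbK]))
  have haA : a ∈ A := by
    rcases hsub with h | h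
    · exact h (mem_connectedComponentIn haK)
    · exact absurd hbA (Set.disjoint_left.mp hd.symm (h hb))
  simp only [hA, mem_iUnion, mem_setOf_eq] at haA
  obtain ⟨c, ⟨hcK, hcP⟩, hac⟩ := haA
  rw [mem_ball] at hac
  exact ((hloc c hcK a haK (by linarith [dpos c hcK]))).mp hcP




lemma mem_connectedComponentIn_symm {α : Type*} [TopologicalSpace α] {F : Set α} {x y : α}
    (h : y ∈ connectedComponentIn F x) : x ∈ connectedComponentIn F y := by
  have hx : x ∈ F := connectedComponentIn_nonempty_iff.mp ⟨y, h⟩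
  rw [← connectedComponentIn_eq h]
  exact mem_connectedComponentIn hx

lemma closure_inter_compl {α : Type*} [TopologicalSpace α] [LocallyConnectedSpace α]
    {K : Set α} (hK : IsClosed K) {a z : α}
    (hz : z ∈ closure (connectedComponentIn Kᶜ a)) (hzK : z ∉ K) :
    z ∈ connectedComponentIn Kᶜ a := by
  have hV : IsOpen (connectedComponentIn Kᶜ z) := hK.isOpen_compl.connectedComponentIn
  have hzV : z ∈ connectedComponentIn Kᶜ z := mem_connectedComponentIn hzK
  obtain ⟨w, hw1, hw2⟩ :=
    mem_closure_iff.mp hz _ hV hzV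
  have e1 := connectedComponentIn_eq hw1
  have e2 := connectedComponentIn_eq hw2
  rw [e2, ← e1]
  exact hzV

lemma infDist_le_norm_sub {K : Set ℂ} {c z : ℂ} (hz : z ∈ K) : infDist c K ≤ ‖z - c‖ := by
  have := infDist_le_dist_of_mem (x := c) hz
  rwa [dist_eq_norm, norm_sub_rev] at this

lemma hasContLog_div_of_mem_comp {K : Set ℂ} (hK : IsCompact K) (hne : K.Nonempty)
    {a b : ℂ} (hab : b ∈ connectedComponentIn Kᶜ a) :
    HasContLog K (fun z => (z - a) / (z - b)) := by
  have hbK : b ∈ Kᶜ := connectedComponentIn_subset _ _ hab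
  have hzb : ∀ z ∈ K, z - b ≠ 0 := fun z hz h => hbK (by rw [sub_eq_zero] at h; exact h ▸ hz)
  apply clopen_transfer hK hne (fun c => HasContLog K (fun z => (z - c) / (z - b))) ?_ hab ?_
  · intro c hcK c' hc'K hd
    have dpos : 0 < infDist c K := (hK.isClosed.notMem_iff_infDist_pos hne).mp hcK
    have hcont : ∀ u : ℂ, ContinuousOn (fun z => (z - u) / (z - b)) K := fun u =>
      ((continuous_id.sub continuous_const).continuousOn).div
        ((continuous_id.sub continuous_const).continuousOn) hzb
    have hbig : ∀ z ∈ K, infDist c K ≤ ‖z - c‖ := fun z hz => infDist_le_norm_sub hz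
    have hbig' : ∀ z ∈ K, infDist c K / 2 ≤ ‖z - c'‖ := by
      intro z hz
      have t : ‖z - c‖ ≤ ‖z - c'‖ + ‖c' - c‖ := by
        have : z - c = (z - c') + (c' - c) := by ring
        rw [this]; exact norm_add_le _ _
      have hd' : ‖c' - c‖ < infDist c K / 2 := by rwa [← dist_eq_norm]
      have := hbig z hz
      linarith
    constructor
    · intro h
      apply h.congr_ratio (hcont c')
      intro z hz
      have he : (z - c') / (z - b) - (z - c) / (z - b) = (c - c') / (z - b) := by
        rw [div_sub_div_same]; ring_nf
      rw [he, norm_div, norm_div]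
      rw [div_lt_div_iff_of_pos_right (norm_pos_iff.mpr (hzb z hz))]
      have : ‖c - c'‖ < infDist c K / 2 := by rwa [← dist_eq_norm, dist_comm]
      linarith [hbig z hz, dpos]
    · intro h
      apply h.congr_ratio (hcont c)
      intro z hz
      have he : (z - c) / (z - b) - (z - c') / (z - b) = (c' - c) / (z - b) := by
        rw [div_sub_div_same]; ring_nf
      rw [he, norm_div, norm_div]
      rw [div_lt_div_iff_of_pos_right (norm_pos_iff.mpr (hzb z hz))]
      have : ‖c' - c‖ < infDist c K / 2 := by rwa [← dist_eq_norm]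
      linarith [hbig' z hz]
  · refine ⟨fun _ => 0, continuousOn_const, ?_⟩
    intro z hz
    simp only [Complex.exp_zero]
    rw [div_self (hzb z hz)]

lemma hasContLog_sub_const_of_big {K : Set ℂ} {a : ℂ} (hne : K.Nonempty)
    (h : ∀ z ∈ K, ‖z‖ < ‖a‖) : HasContLog K (fun z => z - a) := by
  obtain ⟨z₀, hz₀⟩ := hne
  have ha : (-a) ≠ 0 := by
    have := h z₀ hz₀
    intro h0
    rw [neg_eq_zero] at h0
    rw [h0, norm_zero] at this
    exact absurd this (not_lt.mpr (norm_nonneg _))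
  refine HasContLog.congr_ratio ⟨fun _ => Complex.log (-a), continuousOn_const,
    fun z hz => Complex.exp_log ha⟩ ((continuous_id.sub continuous_const).continuousOn) ?_
  intro z hz
  have : z - a - (-a) = z := by ring
  rw [this, norm_neg]
  exact h z hz

lemma hasContLog_sub_of_unbounded {K : Set ℂ} (hK : IsCompact K) (hne : K.Nonempty) {a : ℂ}
    (hub : ¬ IsBounded (connectedComponentIn Kᶜ a)) :
    HasContLog K (fun z => z - a) := by
  obtain ⟨M, hM⟩ := hK.isBounded.subset_closedBall 0
  have hMne : ¬ connectedComponentIn Kᶜ a ⊆ closedBall 0 (M + 1) := fun h =>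
    hub ((isBounded_closedBall).subset h)
  obtain ⟨c, hc, hcM⟩ := not_subset.mp hMne
  apply clopen_transfer hK hne (fun c => HasContLog K (fun z => z - c)) ?_ hc ?_
  · intro c hcK c' hc'K hd
    have dpos : 0 < infDist c K := (hK.isClosed.notMem_iff_infDist_pos hne).mp hcK
    have hbig : ∀ z ∈ K, infDist c K ≤ ‖z - c‖ := fun z hz => infDist_le_norm_sub hz
    have hbig' : ∀ z ∈ K, infDist c K / 2 ≤ ‖z - c'‖ := by
      intro z hz
      have t : ‖z - c‖ ≤ ‖z - c'‖ + ‖c' - c‖ := by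
        have : z - c = (z - c') + (c' - c) := by ring
        rw [this]; exact norm_add_le _ _
      have hd' : ‖c' - c‖ < infDist c K / 2 := by rwa [← dist_eq_norm]
      have := hbig z hz
      linarith
    have hcont : ∀ u : ℂ, ContinuousOn (fun z => z - u) K := fun u =>
      (continuous_id.sub continuous_const).continuousOn
    constructor
    · intro h
      apply h.congr_ratio (hcont c')
      intro z hz
      have he : z - c' - (z - c) = c - c' := by ring
      rw [he]
      have : ‖c - c'‖ < infDist c K / 2 := by rwa [← dist_eq_norm, dist_comm]
      linarith [hbig z hz, dpos]
    · intro h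
      apply h.congr_ratio (hcont c)
      intro z hz
      have he : z - c - (z - c') = c' - c := by ring
      rw [he]
      have : ‖c' - c‖ < infDist c K / 2 := by rwa [← dist_eq_norm]
      linarith [hbig' z hz]
  · apply hasContLog_sub_const_of_big hne
    intro z hz
    have h1 : ‖z‖ ≤ M := by
      have := hM hz
      rwa [mem_closedBall_zero_iff] at this
    have h2 : M + 1 < ‖c‖ := by
      have := hcM
      rw [mem_closedBall_zero_iff] at this
      exact lt_of_not_ge this
    linarith

lemma HasContLog.div {K : Set ℂ} {f₁ f₂ : ℂ → ℂ} (h₁ : HasContLog K f₁) (h₂ : HasContLog K f₂) :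
    HasContLog K (fun z => f₁ z / f₂ z) := by
  obtain ⟨g₁, hg₁, he₁⟩ := h₁
  obtain ⟨g₂, hg₂, he₂⟩ := h₂
  exact ⟨fun z => g₁ z - g₂ z, hg₁.sub hg₂, fun z hz => by
    rw [Complex.exp_sub, he₁ z hz, he₂ z hz]⟩

lemma HasContLog.symm_div {K : Set ℂ} {a b : ℂ} (h : HasContLog K (fun z => (z - a) / (z - b))) :
    HasContLog K (fun z => (z - b) / (z - a)) := by
  obtain ⟨g, hg, he⟩ := h
  exact ⟨fun z => -g z, hg.neg, fun z hz => by
    rw [Complex.exp_neg, he z hz, inv_div]⟩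

lemma HasContLog.union {K₁ K₂ : Set ℂ} (h₁ : IsClosed K₁) (h₂ : IsClosed K₂)
    (hd : Disjoint K₁ K₂) {f : ℂ → ℂ}
    (hl₁ : HasContLog K₁ f) (hl₂ : HasContLog K₂ f) : HasContLog (K₁ ∪ K₂) f := by
  classical
  obtain ⟨g₁, hg₁, he₁⟩ := hl₁
  obtain ⟨g₂, hg₂, he₂⟩ := hl₂
  refine ⟨K₁.piecewise g₁ g₂, ?_, ?_⟩
  · intro z hz
    rcases hz with hz | hz
    · have hK₂c : K₂ᶜ ∈ 𝓝 z := h₂.isOpen_compl.mem_nhds (Set.disjoint_left.mp hd hz)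
      have hsub : (K₁ ∪ K₂) ∩ K₂ᶜ ⊆ K₁ := by
        rintro w ⟨hw1 | hw1, hw2⟩
        · exact hw1
        · exact absurd hw1 hw2
      have base : ContinuousWithinAt g₁ ((K₁ ∪ K₂) ∩ K₂ᶜ) z := (hg₁ z hz).mono hsub
      have base2 : ContinuousWithinAt (K₁.piecewise g₁ g₂) ((K₁ ∪ K₂) ∩ K₂ᶜ) z := by
        apply base.congr
        · intro w hw
          exact Set.piecewise_eq_of_mem _ _ _ (hsub hw)
        · exact Set.piecewise_eq_of_mem _ _ _ hz
      apply base2.mono_of_mem_nhdsWithin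
      exact inter_mem self_mem_nhdsWithin (mem_nhdsWithin_of_mem_nhds hK₂c)
    · have hzK₁ : z ∉ K₁ := Set.disjoint_right.mp hd hz
      have hK₁c : K₁ᶜ ∈ 𝓝 z := h₁.isOpen_compl.mem_nhds hzK₁
      have hsub : (K₁ ∪ K₂) ∩ K₁ᶜ ⊆ K₂ := by
        rintro w ⟨hw1 | hw1, hw2⟩
        · exact absurd hw1 hw2
        · exact hw1
      have base : ContinuousWithinAt g₂ ((K₁ ∪ K₂) ∩ K₁ᶜ) z := (hg₂ z hz).mono hsub
      have base2 : ContinuousWithinAt (K₁.piecewise g₁ g₂) ((K₁ ∪ K₂) ∩ K₁ᶜ) z := by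
        apply base.congr
        · intro w hw
          exact Set.piecewise_eq_of_notMem _ _ _ (fun h => hw.2 h)
        · exact Set.piecewise_eq_of_notMem _ _ _ hzK₁
      apply base2.mono_of_mem_nhdsWithin
      exact inter_mem self_mem_nhdsWithin (mem_nhdsWithin_of_mem_nhds hK₁c)
  · intro z hz
    rcases hz with hz | hz
    · rw [Set.piecewise_eq_of_mem _ _ _ hz]; exact he₁ z hz
    · rw [Set.piecewise_eq_of_notMem _ _ _ (Set.disjoint_right.mp hd hz)]; exact he₂ z hz



lemma hasContLog_closedBall {R : ℝ} (hR : 0 ≤ R) {F : ℂ → ℂ}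
    (hF : ContinuousOn F (closedBall 0 R)) (h0 : ∀ z ∈ closedBall (0:ℂ) R, F z ≠ 0) :
    HasContLog (closedBall 0 R) F := by
  have hcpt : IsCompact (closedBall (0:ℂ) R) := isCompact_closedBall 0 R
  have hne : (closedBall (0:ℂ) R).Nonempty := ⟨0, mem_closedBall_self hR⟩
  obtain ⟨z₀, hz₀, hmin⟩ := hcpt.exists_isMinOn hne hF.norm
  set ε := ‖F z₀‖ with hε
  have hεpos : 0 < ε := norm_pos_iff.mpr (h0 z₀ hz₀)
  obtain ⟨δ, hδpos, hδ⟩ := Metric.uniformContinuousOn_iff.mp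
    (hcpt.uniformContinuousOn_of_continuous hF) ε hεpos
  obtain ⟨n, hn⟩ := exists_nat_gt (R / δ)
  have hnpos : 0 < (n : ℝ) := lt_of_le_of_lt (div_nonneg hR hδpos.le) hn
  have hn0 : (n : ℂ) ≠ 0 := by
    simp only [ne_eq, Nat.cast_eq_zero]
    exact_mod_cast hnpos.ne'
  have hRn : R / n < δ := by
    rw [div_lt_iff₀ hnpos]
    rw [div_lt_iff₀ hδpos] at hn
    linarith [hn]
  have hnorm : ∀ m : ℕ, m ≤ n → ‖((m : ℂ) / n)‖ ≤ 1 := by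
    intro m hm
    rw [norm_div]
    simp only [Complex.norm_natCast]
    rw [div_le_one (by exact_mod_cast hnpos)]
    exact_mod_cast hm
  have hmaps : ∀ m : ℕ, m ≤ n → ∀ z ∈ closedBall (0:ℂ) R, ((m : ℂ) / n) * z ∈ closedBall (0:ℂ) R := by
    intro m hm z hz
    rw [mem_closedBall_zero_iff] at hz ⊢
    calc ‖((m:ℂ)/n) * z‖ = ‖((m:ℂ)/n)‖ * ‖z‖ := norm_mul _ _
    _ ≤ 1 * ‖z‖ := by
        apply mul_le_mul_of_nonneg_right (hnorm m hm) (norm_nonneg z)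
    _ ≤ R := by rw [one_mul]; exact hz
  have key : ∀ k : ℕ, k ≤ n → HasContLog (closedBall 0 R) (fun z => F (((k:ℂ)/n) * z)) := by
    intro k
    induction k with
    | zero =>
      intro _
      refine ⟨fun _ => Complex.log (F 0), continuousOn_const, ?_⟩
      intro z hz
      simp only [Nat.cast_zero, zero_div, zero_mul]
      exact Complex.exp_log (h0 0 (mem_closedBall_self hR))
    | succ k ih =>
      intro hk1
      have hk : k ≤ n := Nat.le_of_succ_le hk1
      apply (ih hk).congr_ratio
      · apply hF.comp ((continuous_const.mul continuous_id).continuousOn)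
        intro z hz
        exact hmaps (k+1) hk1 z hz
      · intro z hz
        have hd : dist (((k+1:ℕ):ℂ)/n * z) (((k:ℕ):ℂ)/n * z) < δ := by
          rw [dist_eq_norm]
          have he : ((k+1:ℕ):ℂ)/n * z - ((k:ℕ):ℂ)/n * z = z / n := by
            push_cast
            field_simp
            ring
          rw [he, norm_div]
          simp only [Complex.norm_natCast]
          rw [mem_closedBall_zero_iff] at hz
          calc ‖z‖ / (n:ℝ) ≤ R / n := by gcongr
          _ < δ := hRn
        have h1 := hδ _ (hmaps (k+1) hk1 z hz) _ (hmaps k hk z hz) hd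
        rw [dist_eq_norm] at h1
        calc ‖F (((k+1:ℕ):ℂ)/n * z) - F (((k:ℕ):ℂ)/n * z)‖ < ε := h1
        _ ≤ ‖F (((k:ℕ):ℂ)/n * z)‖ := hmin (hmaps k hk z hz)
  have hfin := key n le_rfl
  have he : (fun z : ℂ => F (((n:ℂ)/n) * z)) = F := by
    funext z
    rw [div_self hn0, one_mul]
  rwa [he] at hfin



lemma no_log_on_circle {R : ℝ} {a : ℂ} (ha : ‖a‖ < R) :
    ¬ HasContLog (sphere 0 R) (fun z => z - a) := by
  rintro ⟨L, hL, hLe⟩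
  have hR : 0 < R := lt_of_le_of_lt (norm_nonneg a) ha
  have hzne : ∀ θ : ℝ, circleMap 0 R θ - a ≠ 0 := by
    intro θ h
    rw [sub_eq_zero] at h
    have h1 : ‖circleMap 0 R θ‖ = R := by
      have := circleMap_mem_sphere (0:ℂ) hR.le θ
      rwa [mem_sphere_zero_iff_norm] at this
    rw [h] at h1
    exact ha.ne h1
  set w : ℝ → ℂ := fun t => circleMap 0 R t * Complex.I * (circleMap 0 R t - a)⁻¹ with hw
  have hwc : Continuous w := by
    apply ((continuous_circleMap 0 R).mul continuous_const).mul
    exact ((continuous_circleMap 0 R).sub continuous_const).inv₀ fun t => hzne t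
  have hRa : (R : ℂ) - a ≠ 0 := by
    have := hzne 0
    simpa [circleMap] using this
  set ψ : ℝ → ℂ := fun θ => Complex.log ((R : ℂ) - a) + ∫ t in (0:ℝ)..θ, w t with hψ
  have hψd : ∀ θ, HasDerivAt ψ (w θ) θ := by
    intro θ
    have h1 : HasDerivAt (fun θ => ∫ t in (0:ℝ)..θ, w t) (w θ) θ :=
      intervalIntegral.integral_hasDerivAt_right (hwc.intervalIntegrable _ _)
        (hwc.stronglyMeasurableAtFilter _ _) hwc.continuousAt
    simpa [hψ] using h1.const_add (Complex.log ((R:ℂ) - a))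
  have hψc : Continuous ψ := by
    apply continuous_iff_continuousAt.mpr fun θ => (hψd θ).continuousAt
  have hψe : ∀ θ, Complex.exp (ψ θ) = circleMap 0 R θ - a := by
    set h : ℝ → ℂ := fun θ => Complex.exp (-ψ θ) * (circleMap 0 R θ - a) with hh
    have hd : ∀ θ, HasDerivAt h 0 θ := by
      intro θ
      have d1 : HasDerivAt (fun θ => Complex.exp (-ψ θ))
          (Complex.exp (-ψ θ) * (-w θ)) θ := ((hψd θ).neg).cexp
      have d2 : HasDerivAt (fun θ => circleMap 0 R θ - a) (circleMap 0 R θ * Complex.I) θ :=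
        (hasDerivAt_circleMap 0 R θ).sub_const a
      have := d1.mul d2
      convert this using 1
      · rfl
      · rfl
      rw [hw]
      have hne := hzne θ
      field_simp
      ring
    have hconst : ∀ θ, h θ = h 0 :=
      fun θ => is_const_of_deriv_eq_zero (fun t => (hd t).differentiableAt)
        (fun t => (hd t).deriv) θ 0
    have h0 : h 0 = 1 := by
      have hψ0 : ψ 0 = Complex.log ((R:ℂ) - a) := by
        simp [hψ]
      rw [hh]
      simp only [hψ0]
      rw [Complex.exp_neg, Complex.exp_log hRa]
      have : circleMap 0 R 0 = (R : ℂ) := by simp [circleMap]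
      rw [this, inv_mul_cancel₀ hRa]
    intro θ
    have hc := hconst θ
    rw [h0, hh] at hc
    simp only at hc
    rw [Complex.exp_neg] at hc
    rw [inv_mul_eq_one₀ (Complex.exp_ne_zero _)] at hc
    exact hc
  set φ : ℝ → ℂ := fun θ => L (circleMap 0 R θ) with hφ
  have hφc : Continuous φ :=
    hL.comp_continuous (continuous_circleMap 0 R) fun θ => circleMap_mem_sphere _ hR.le θ
  have hφe : ∀ θ, Complex.exp (φ θ) = circleMap 0 R θ - a :=
    fun θ => hLe _ (circleMap_mem_sphere _ hR.le θ)
  set q : ℝ → ℂ := fun θ => φ θ - ψ θ with hq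
  have hqc : Continuous q := hφc.sub hψc
  have hq1 : ∀ θ, Complex.exp (q θ) = 1 := by
    intro θ
    rw [hq]
    simp only
    rw [Complex.exp_sub, hφe, hψe, div_self (hzne θ)]
  have hqconst : q (2 * Real.pi) = q 0 := by
    have hclopen : IsClopen {θ : ℝ | q θ = q 0} := by
      constructor
      · exact isClosed_eq hqc continuous_const
      · rw [isOpen_iff_mem_nhds]
        intro θ₀ hθ₀
        have hev : ∀ᶠ t in 𝓝 θ₀, ‖q t - q θ₀‖ < 2 * Real.pi := by
          have ht := hqc.tendsto θ₀
          have := Metric.tendsto_nhds.mp ht (2 * Real.pi) (by positivity)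
          filter_upwards [this] with t ht2
          rwa [dist_eq_norm] at ht2
        filter_upwards [hev] with t ht
        obtain ⟨m, hm⟩ := Complex.exp_eq_one_iff.mp (hq1 t)
        obtain ⟨m₀, hm₀⟩ := Complex.exp_eq_one_iff.mp (hq1 θ₀)
        have heq : q t - q θ₀ = ((m - m₀ : ℤ) : ℂ) * (2 * Real.pi * Complex.I) := by
          rw [hm, hm₀]
          push_cast
          ring
        have hmm : m = m₀ := by
          by_contra hne
          have h1 : (1 : ℝ) ≤ |((m - m₀ : ℤ) : ℝ)| := by
            rw [← Int.cast_abs]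
            exact_mod_cast Int.one_le_abs (sub_ne_zero.mpr hne)
          have h2 : ‖q t - q θ₀‖ = |((m - m₀ : ℤ) : ℝ)| * (2 * Real.pi) := by
            rw [heq, norm_mul]
            have e1 : ‖((m - m₀ : ℤ) : ℂ)‖ = |((m - m₀ : ℤ) : ℝ)| := by
              rw [show (((m - m₀ : ℤ) : ℂ)) = (((m - m₀ : ℤ) : ℝ) : ℂ) by push_cast; ring,
                Complex.norm_real, Real.norm_eq_abs]
            have e2 : ‖(2 * (Real.pi : ℂ) * Complex.I)‖ = 2 * Real.pi := by
              rw [norm_mul, norm_mul, Complex.norm_I, mul_one]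
              have : ‖(2:ℂ)‖ = 2 := by norm_num
              rw [this, Complex.norm_real, Real.norm_eq_abs, abs_of_pos Real.pi_pos]
            rw [e1, e2]
          have : 2 * Real.pi ≤ ‖q t - q θ₀‖ := by
            rw [h2]
            nlinarith [Real.pi_pos]
          linarith
        show q t = q 0
        have hqt : q t = q θ₀ := by rw [hm, hm₀, hmm]
        exact hqt.trans hθ₀
    have huniv : {θ : ℝ | q θ = q 0} = univ := hclopen.eq_univ ⟨0, rfl⟩
    have : (2 * Real.pi) ∈ {θ : ℝ | q θ = q 0} := huniv ▸ mem_univ _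
    exact this
  have hφper : φ (2 * Real.pi) = φ 0 := by
    rw [hφ]
    simp only
    congr 1
    have := periodic_circleMap 0 R 0
    simpa using this
  have hint : ψ (2 * Real.pi) - ψ 0 = 2 * (Real.pi:ℂ) * Complex.I := by
    have hball : a ∈ ball (0:ℂ) R := mem_ball_zero_iff.mpr ha
    have hcint := circleIntegral.integral_sub_inv_of_mem_ball hball
    have hw2 : (∮ z in C(0, R), (z - a)⁻¹) = ∫ t in (0:ℝ)..(2*Real.pi), w t := by
      unfold circleIntegral
      apply intervalIntegral.integral_congr
      intro t _
      simp only [deriv_circleMap, hw, smul_eq_mul]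
    have e3 : ψ (2*Real.pi) - ψ 0 = ∫ t in (0:ℝ)..(2*Real.pi), w t := by
      rw [hψ]
      simp only [intervalIntegral.integral_same]
      ring
    rw [e3, ← hw2, hcint]
  have hzero : (2 * (Real.pi:ℂ) * Complex.I) = 0 := by
    have e1 : (0:ℂ) = 0 - (2 * (Real.pi:ℂ) * Complex.I) := by
      calc (0:ℂ) = q (2*Real.pi) - q 0 := by rw [hqconst, sub_self]
      _ = (φ (2*Real.pi) - φ 0) - (ψ (2*Real.pi) - ψ 0) := by rw [hq]; ring
      _ = 0 - (2*(Real.pi:ℂ)*Complex.I) := by rw [hφper, sub_self, hint]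
    rw [zero_sub] at e1
    exact neg_eq_zero.mp e1.symm
  have hne2 : (2 * (Real.pi:ℂ) * Complex.I) ≠ 0 := by
    apply mul_ne_zero (mul_ne_zero two_ne_zero _) Complex.I_ne_zero
    exact_mod_cast Real.pi_ne_zero
  exact hne2 hzero



lemma not_hasContLog_of_separated {K : Set ℂ} (hK : IsCompact K) {a b : ℂ}
    (haK : a ∉ K) (hbK : b ∉ K) (hbC : b ∉ connectedComponentIn Kᶜ a)
    (hbound : IsBounded (connectedComponentIn Kᶜ a)) :
    ¬ HasContLog K (fun z => (z - a) / (z - b)) := by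
  rintro ⟨g, hg, hge⟩
  classical
  set C := connectedComponentIn Kᶜ a with hC
  have haC : a ∈ C := mem_connectedComponentIn haK
  have hCopen : IsOpen C := hK.isClosed.isOpen_compl.connectedComponentIn
  have hfr : frontier C ⊆ K := by
    intro z hz
    by_contra hzK
    have h1 : z ∈ closure C := hz.1
    have h2 : z ∉ C := by
      intro h
      exact hz.2 (by rwa [hCopen.interior_eq])
    exact h2 (closure_inter_compl hK.isClosed h1 hzK)
  have hbcl : b ∉ closure C := fun h => hbC (closure_inter_compl hK.isClosed h hbK)
  obtain ⟨gt, hgt⟩ := ContinuousMap.exists_restrict_eq (Y := ℂ) (isClosed_frontier (s := C))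
    ⟨fun z => g z.1, (hg.mono hfr).restrict⟩
  have hgt' : ∀ z ∈ frontier C, gt z = g z := by
    intro z hz
    have := DFunLike.congr_fun hgt (⟨z, hz⟩ : frontier C)
    exact this
  set H : ℂ → ℂ := (closure C).piecewise (fun z => (z - b) * Complex.exp (gt z))
    (fun z => z - a) with hH
  have hHc : Continuous H := by
    apply continuous_piecewise
    · intro z hz
      have hzf : z ∈ frontier C := frontier_closure_subset hz
      have hzK : z ∈ K := hfr hzf
      rw [hgt' z hzf, hge z hzK]
      have hzb : z - b ≠ 0 := sub_ne_zero.mpr (fun h => hbK (h ▸ hzK))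
      field_simp
    · exact ((continuous_id.sub continuous_const).mul gt.continuous.cexp).continuousOn
    · exact (continuous_id.sub continuous_const).continuousOn
  have hHne : ∀ z, H z ≠ 0 := by
    intro z
    by_cases hz : z ∈ closure C
    · rw [hH, Set.piecewise_eq_of_mem _ _ _ hz]
      exact mul_ne_zero (sub_ne_zero.mpr (fun h => hbcl (h ▸ hz))) (Complex.exp_ne_zero _)
    · rw [hH, Set.piecewise_eq_of_notMem _ _ _ hz]
      exact sub_ne_zero.mpr (fun h => hz (h ▸ subset_closure haC))
  obtain ⟨R, hRa, hRC⟩ := hbound.closure.subset_ball_lt ‖a‖ 0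
  have hR0 : 0 ≤ R := le_of_lt (lt_of_le_of_lt (norm_nonneg a) hRa)
  obtain ⟨L, hLc, hLe⟩ := hasContLog_closedBall hR0 hHc.continuousOn (fun z _ => hHne z)
  apply no_log_on_circle hRa
  refine ⟨L, hLc.mono sphere_subset_closedBall, ?_⟩
  intro z hz
  have hzc : z ∉ closure C := by
    intro h
    have h1 := hRC h
    rw [mem_ball_zero_iff] at h1
    rw [mem_sphere_zero_iff_norm] at hz
    exact absurd h1 (by rw [hz]; exact lt_irrefl R)
  rw [hLe z (sphere_subset_closedBall hz), hH, Set.piecewise_eq_of_notMem _ _ _ hzc]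



-- SECTION: bridging
lemma coe_image_compl_subset {K₀ : Set ℂ} :
    ((↑) '' K₀ᶜ : Set ℂ∞) ⊆ ((↑) '' K₀ : Set ℂ∞)ᶜ := by
  rintro p ⟨z, hz, rfl⟩ ⟨w, hw, he⟩
  exact hz (OnePoint.coe_injective he ▸ hw)

lemma coe_not_mem_image {K₀ : Set ℂ} {z : ℂ} (hz : z ∉ K₀) :
    (z : ℂ∞) ∉ ((↑) '' K₀ : Set ℂ∞) := fun ⟨w, hw, he⟩ => hz (OnePoint.coe_injective he ▸ hw)

lemma sphere_comp_of_plane {K₀ : Set ℂ} {a b : ℂ} (h : b ∈ connectedComponentIn K₀ᶜ a) :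
    (b : ℂ∞) ∈ connectedComponentIn (((↑) '' K₀ : Set ℂ∞))ᶜ (a : ℂ∞) := by
  have haK : a ∈ K₀ᶜ := connectedComponentIn_nonempty_iff.mp ⟨b, h⟩
  have hpc : IsPreconnected ((↑) '' connectedComponentIn K₀ᶜ a : Set ℂ∞) :=
    (isPreconnected_connectedComponentIn).image _ OnePoint.continuous_coe.continuousOn
  apply hpc.subset_connectedComponentIn ⟨a, mem_connectedComponentIn haK, rfl⟩
    ((image_mono (connectedComponentIn_subset _ _)).trans coe_image_compl_subset)
  exact ⟨b, h, rfl⟩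

lemma infty_mem_comp_of_unbounded {K₀ : Set ℂ} {a : ℂ} (haK : a ∉ K₀)
    (hub : ¬ IsBounded (connectedComponentIn K₀ᶜ a)) :
    (∞ : ℂ∞) ∈ connectedComponentIn (((↑) '' K₀ : Set ℂ∞))ᶜ (a : ℂ∞) := by
  set C := connectedComponentIn K₀ᶜ a with hC
  have hinf : (∞ : ℂ∞) ∈ closure ((↑) '' C : Set ℂ∞) := by
    rw [mem_closure_iff_nhds_basis OnePoint.hasBasis_nhds_infty]
    rintro s ⟨-, hscpt⟩
    have : ¬ C ⊆ s := fun h => hub (hscpt.isBounded.subset h)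
    obtain ⟨z, hzC, hzs⟩ := not_subset.mp this
    exact ⟨(z : ℂ∞), ⟨z, hzC, rfl⟩, Or.inl ⟨z, hzs, rfl⟩⟩
  have hpc : IsPreconnected (((↑) '' C : Set ℂ∞) ∪ {∞}) := by
    apply (isPreconnected_connectedComponentIn.image ((↑) : ℂ → ℂ∞)
      OnePoint.continuous_coe.continuousOn).subset_closure subset_union_left
    exact union_subset subset_closure (singleton_subset_iff.mpr hinf)
  apply hpc.subset_connectedComponentIn
    (Or.inl ⟨a, mem_connectedComponentIn haK, rfl⟩)
  · apply union_subset
    · exact (image_mono (connectedComponentIn_subset _ _)).trans coe_image_compl_subset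
    · simp only [singleton_subset_iff, mem_compl_iff]
      exact OnePoint.infty_notMem_image_coe
  · exact Or.inr rfl

lemma sphere_comp_subset_of_bounded {K₀ : Set ℂ} (hK : IsCompact K₀) {a : ℂ} (haK : a ∉ K₀)
    (hb : IsBounded (connectedComponentIn K₀ᶜ a)) :
    connectedComponentIn (((↑) '' K₀ : Set ℂ∞))ᶜ (a : ℂ∞) ⊆
      ((↑) '' connectedComponentIn K₀ᶜ a : Set ℂ∞) := by
  set C := connectedComponentIn K₀ᶜ a with hC
  have hCopen : IsOpen C := hK.isClosed.isOpen_compl.connectedComponentIn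
  have hclcpt : IsCompact (closure C) := hb.isCompact_closure
  have himgcl : IsClosed ((↑) '' closure C : Set ℂ∞) :=
    (hclcpt.image OnePoint.continuous_coe).isClosed
  set A : Set ℂ∞ := (↑) '' C with hA
  set B : Set ℂ∞ := (((↑) '' K₀ : Set ℂ∞))ᶜ ∩ ((↑) '' closure C : Set ℂ∞)ᶜ with hB
  have hAopen : IsOpen A := OnePoint.isOpenMap_coe _ hCopen
  have hBopen : IsOpen B :=
    ((hK.image OnePoint.continuous_coe).isClosed.isOpen_compl).inter himgcl.isOpen_compl
  have hdisj : Disjoint A B := by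
    rw [Set.disjoint_left]
    rintro p ⟨z, hz, rfl⟩ hpB
    exact hpB.2 ⟨z, subset_closure hz, rfl⟩
  have hcover : (((↑) '' K₀ : Set ℂ∞))ᶜ ⊆ A ∪ B := by
    intro p hp
    by_cases hpB : p ∈ ((↑) '' closure C : Set ℂ∞)
    · obtain ⟨z, hz, rfl⟩ := hpB
      have hzK : z ∉ K₀ := fun h => hp ⟨z, h, rfl⟩
      exact Or.inl ⟨z, closure_inter_compl hK.isClosed hz hzK, rfl⟩
    · exact Or.inr ⟨hp, hpB⟩
  have hsub := (isPreconnected_connectedComponentIn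
    (F := (((↑) '' K₀ : Set ℂ∞))ᶜ) (x := (a : ℂ∞))).subset_or_subset hAopen hBopen hdisj
    ((connectedComponentIn_subset _ _).trans hcover)
  have haA : (a : ℂ∞) ∈ A := ⟨a, mem_connectedComponentIn haK, rfl⟩
  have haco : (a : ℂ∞) ∈ connectedComponentIn (((↑) '' K₀ : Set ℂ∞))ᶜ (a : ℂ∞) :=
    mem_connectedComponentIn (coe_not_mem_image haK)
  rcases hsub with h | h
  · exact h
  · exact absurd haA (fun hb' => (Set.disjoint_left.mp hdisj hb') (h haco))

-- SECTION: Eilenberg equivalence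
lemma hasContLog_of_sphere_comp {K₀ : Set ℂ} (hK : IsCompact K₀) (hne : K₀.Nonempty)
    {a b : ℂ} (haK : a ∉ K₀) (hbK : b ∉ K₀)
    (h : (b : ℂ∞) ∈ connectedComponentIn (((↑) '' K₀ : Set ℂ∞))ᶜ (a : ℂ∞)) :
    HasContLog K₀ (fun z => (z - a) / (z - b)) := by
  by_cases hba : IsBounded (connectedComponentIn K₀ᶜ a)
  · have hsub := sphere_comp_subset_of_bounded hK haK hba
    obtain ⟨b', hb', he⟩ := hsub h
    rw [OnePoint.coe_eq_coe] at he
    exact hasContLog_div_of_mem_comp hK hne (he ▸ hb')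
  · by_cases hbb : IsBounded (connectedComponentIn K₀ᶜ b)
    · exfalso
      have h' := mem_connectedComponentIn_symm h
      have hsub := sphere_comp_subset_of_bounded hK hbK hbb
      obtain ⟨a', ha', he⟩ := hsub h'
      rw [OnePoint.coe_eq_coe] at he
      have : connectedComponentIn K₀ᶜ b = connectedComponentIn K₀ᶜ a :=
        connectedComponentIn_eq (he ▸ ha')
      rw [this] at hbb
      exact hba hbb
    · exact (hasContLog_sub_of_unbounded hK hne hba).div
        (hasContLog_sub_of_unbounded hK hne hbb)

lemma sphere_comp_of_hasContLog {K₀ : Set ℂ} (hK : IsCompact K₀)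
    {a b : ℂ} (haK : a ∉ K₀) (hbK : b ∉ K₀)
    (hE : HasContLog K₀ (fun z => (z - a) / (z - b))) :
    (b : ℂ∞) ∈ connectedComponentIn (((↑) '' K₀ : Set ℂ∞))ᶜ (a : ℂ∞) := by
  by_contra hcon
  have hbC : b ∉ connectedComponentIn K₀ᶜ a := fun h => hcon (sphere_comp_of_plane h)
  have haC : a ∉ connectedComponentIn K₀ᶜ b := fun h => hbC (mem_connectedComponentIn_symm h)
  by_cases hba : IsBounded (connectedComponentIn K₀ᶜ a)
  · exact not_hasContLog_of_separated hK haK hbK hbC hba hE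
  · by_cases hbb : IsBounded (connectedComponentIn K₀ᶜ b)
    · exact not_hasContLog_of_separated hK hbK haK haC hbb hE.symm_div
    · apply hcon
      have h1 := infty_mem_comp_of_unbounded haK hba
      have h2 := infty_mem_comp_of_unbounded hbK hbb
      rw [connectedComponentIn_eq h1]
      exact mem_connectedComponentIn_symm h2

def sphereInv : ℂ∞ → ℂ∞ := fun o =>
  o.elim ((0 : ℂ) : ℂ∞) (fun z => if z = 0 then ∞ else ((z⁻¹ : ℂ) : ℂ∞))

lemma sphereInv_invol : Function.Involutive sphereInv := by
  intro o
  induction o using OnePoint.rec with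
  | infty => simp [sphereInv]
  | coe z =>
    by_cases hz : z = 0
    · simp [sphereInv, hz]
    · simp [sphereInv, hz, inv_eq_zero, inv_inv]

lemma continuous_sphereInv : Continuous sphereInv := by
  rw [OnePoint.continuous_iff]
  constructor
  · rw [Filter.coclosedCompact_eq_cocompact, ← Metric.cobounded_eq_cocompact]
    have hev : ∀ᶠ z : ℂ in cobounded ℂ, sphereInv (z : ℂ∞) = ((z⁻¹ : ℂ) : ℂ∞) := by
      filter_upwards [eventually_ne_cobounded (0:ℂ)] with z hz
      simp [sphereInv, hz]
    have h2 : Tendsto (fun z : ℂ => ((z⁻¹ : ℂ) : ℂ∞)) (cobounded ℂ) (𝓝 (sphereInv ∞)) := by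
      have : Tendsto (fun z : ℂ => (z⁻¹ : ℂ)) (cobounded ℂ) (𝓝 0) := tendsto_inv₀_cobounded
      exact (OnePoint.continuous_coe.tendsto 0).comp this
    have hev' : (fun z : ℂ => ((z⁻¹ : ℂ) : ℂ∞)) =ᶠ[cobounded ℂ] (fun z => sphereInv (z : ℂ∞)) :=
      hev.mono fun z h => h.symm
    exact Tendsto.congr' hev' h2
  · rw [continuous_iff_continuousAt]
    intro z
    by_cases hz : z = 0
    · subst hz
      have : sphereInv ((0:ℂ) : ℂ∞) = ∞ := by simp [sphereInv]
      unfold ContinuousAt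
      simp only [this]
      rw [OnePoint.hasBasis_nhds_infty.tendsto_right_iff]
      rintro s ⟨-, hscpt⟩
      obtain ⟨M₀, hM₀⟩ := hscpt.isBounded.subset_closedBall 0
      set M := max M₀ 0 with hMdef
      have hM : s ⊆ closedBall 0 M := hM₀.trans (closedBall_subset_closedBall (le_max_left _ _))
      have hM0 : 0 < M + 1 := by
        have : (0:ℝ) ≤ M := le_max_right _ _
        linarith
      filter_upwards [Metric.ball_mem_nhds (0:ℂ) (show 0 < (M+1)⁻¹ by positivity)] with w hw
      by_cases hw0 : w = 0
      · simp [sphereInv, hw0]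
      · have : sphereInv (w : ℂ∞) = ((w⁻¹:ℂ) : ℂ∞) := by simp [sphereInv, hw0]
        rw [this]
        left
        refine ⟨w⁻¹, ?_, rfl⟩
        intro hmem
        have h1 := hM hmem
        rw [mem_closedBall_zero_iff] at h1
        rw [mem_ball_zero_iff] at hw
        have h2 : 0 < ‖w‖ := norm_pos_iff.mpr hw0
        rw [norm_inv] at h1
        have h4 : (M + 1) < ‖w‖⁻¹ := by
          have := inv_strictAnti₀ h2 hw
          rwa [inv_inv] at this
        linarith
    · have hev : ∀ᶠ w : ℂ in 𝓝 z, sphereInv (w : ℂ∞) = ((w⁻¹ : ℂ) : ℂ∞) := by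
        filter_upwards [isOpen_compl_singleton.mem_nhds hz] with w hw
        simp only [mem_compl_iff, mem_singleton_iff] at hw
        simp [sphereInv, hw]
      have : ContinuousAt (fun w : ℂ => ((w⁻¹ : ℂ) : ℂ∞)) z :=
        (OnePoint.continuous_coe.continuousAt).comp (continuousAt_inv₀ hz)
      have hev' : (fun w : ℂ => ((w⁻¹ : ℂ) : ℂ∞)) =ᶠ[𝓝 z] (fun w => sphereInv (w : ℂ∞)) :=
        hev.mono fun w h => h.symm
      exact this.congr hev'

lemma Homeomorph.image_connectedComponentIn' {α β : Type*} [TopologicalSpace α]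
    [TopologicalSpace β] (h : α ≃ₜ β) {s : Set α} {x : α} (hx : x ∈ s) :
    h '' connectedComponentIn s x = connectedComponentIn (h '' s) (h x) := by
  apply subset_antisymm
  · exact (isPreconnected_connectedComponentIn.image _
      h.continuous.continuousOn).subset_connectedComponentIn
      ⟨x, mem_connectedComponentIn hx, rfl⟩
      (image_mono (connectedComponentIn_subset _ _))
  · intro p hp
    have hsub : connectedComponentIn (h '' s) (h x) ⊆ h '' s := connectedComponentIn_subset _ _
    have himg : IsPreconnected (h.symm '' connectedComponentIn (h '' s) (h x)) :=
      isPreconnected_connectedComponentIn.image _ h.symm.continuous.continuousOn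
    have hmem : x ∈ h.symm '' connectedComponentIn (h '' s) (h x) :=
      ⟨h x, mem_connectedComponentIn ⟨x, hx, rfl⟩, h.symm_apply_apply x⟩
    have hss : h.symm '' connectedComponentIn (h '' s) (h x) ⊆ s := by
      rintro q ⟨r, hr, rfl⟩
      obtain ⟨u, hu, rfl⟩ := hsub hr
      simpa using hu
    have := himg.subset_connectedComponentIn hmem hss ⟨p, hp, rfl⟩
    exact ⟨h.symm p, this, h.apply_symm_apply p⟩

lemma exists_mobius_to_infty (p : ℂ∞) : ∃ m : ℂ∞ ≃ₜ ℂ∞, m p = ∞ := by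
  induction p using OnePoint.rec with
  | infty => exact ⟨Homeomorph.refl _, rfl⟩
  | coe c =>
    let ι : ℂ∞ ≃ₜ ℂ∞ :=
      { toFun := sphereInv, invFun := sphereInv,
        left_inv := sphereInv_invol, right_inv := sphereInv_invol,
        continuous_toFun := continuous_sphereInv, continuous_invFun := continuous_sphereInv }
    have hι : ι ((0:ℂ) : ℂ∞) = ∞ := by
      show sphereInv ((0:ℂ) : ℂ∞) = ∞
      simp [sphereInv]
    refine ⟨((Homeomorph.subRight c).onePointCongr).trans ι, ?_⟩
    have h1 : (Homeomorph.subRight c).onePointCongr ((c : ℂ∞)) = ((0:ℂ) : ℂ∞) := by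
      simp [Homeomorph.onePointCongr]
    simp only [Homeomorph.trans_apply, h1, hι]

lemma isCompact_coe_preimage {S : Set ℂ∞} (hS : IsClosed S) (hiS : ∞ ∉ S) :
    IsCompact (((↑) : ℂ → ℂ∞) ⁻¹' S) ∧ ((↑) : ℂ → ℂ∞) '' ((↑) ⁻¹' S) = S := by
  have hsub : S ⊆ range ((↑) : ℂ → ℂ∞) := by
    intro p hp
    rcases OnePoint.ne_infty_iff_exists.mp (fun h => hiS (h ▸ hp)) with ⟨z, hz⟩
    exact ⟨z, hz⟩
  constructor
  · have hclosed : IsClosed (((↑) : ℂ → ℂ∞) ⁻¹' S) := hS.preimage OnePoint.continuous_coe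
    have hmem : Sᶜ ∈ 𝓝 (∞ : ℂ∞) := hS.isOpen_compl.mem_nhds hiS
    obtain ⟨s, ⟨-, hscpt⟩, hsub2⟩ := OnePoint.hasBasis_nhds_infty.mem_iff.mp hmem
    have hs : ((↑) : ℂ → ℂ∞) ⁻¹' S ⊆ s := by
      intro z hz
      by_contra hzs
      exact (hsub2 (Or.inl ⟨z, hzs, rfl⟩)) hz
    exact IsCompact.of_isClosed_subset hscpt hclosed hs
  · rw [Set.image_preimage_eq_inter_range, inter_eq_self_of_subset_left hsub]



lemma key_finite (X Y : Set ℂ∞) (hX : IsClosed X) (hY : IsClosed Y) (hXY : Disjoint X Y)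
    (hXne : X.Nonempty) (hYne : Y.Nonempty)
    (x y : ℂ∞) (hx : x ∉ X ∪ Y) (hy : y ∉ X ∪ Y)
    (hiX : ∞ ∉ X) (hiY : ∞ ∉ Y) (hix : x ≠ ∞) (hiy : y ≠ ∞)
    (h1 : y ∈ connectedComponentIn Xᶜ x) (h2 : y ∈ connectedComponentIn Yᶜ x) :
    y ∈ connectedComponentIn (X ∪ Y)ᶜ x := by
  obtain ⟨a, rfl⟩ := OnePoint.ne_infty_iff_exists.mp hix
  obtain ⟨b, rfl⟩ := OnePoint.ne_infty_iff_exists.mp hiy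
  obtain ⟨hX₀cpt, hX₀img⟩ := isCompact_coe_preimage hX hiX
  obtain ⟨hY₀cpt, hY₀img⟩ := isCompact_coe_preimage hY hiY
  set X₀ := ((↑) : ℂ → ℂ∞) ⁻¹' X with hX₀
  set Y₀ := ((↑) : ℂ → ℂ∞) ⁻¹' Y with hY₀
  have haX : a ∉ X₀ := fun h => hx (Or.inl h)
  have haY : a ∉ Y₀ := fun h => hx (Or.inr h)
  have hbX : b ∉ X₀ := fun h => hy (Or.inl h)
  have hbY : b ∉ Y₀ := fun h => hy (Or.inr h)
  have hX₀ne : X₀.Nonempty := by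
    obtain ⟨p, hp⟩ := hXne
    obtain ⟨z, rfl⟩ := OnePoint.ne_infty_iff_exists.mp (fun h => hiX (h ▸ hp))
    exact ⟨z, hp⟩
  have hY₀ne : Y₀.Nonempty := by
    obtain ⟨p, hp⟩ := hYne
    obtain ⟨z, rfl⟩ := OnePoint.ne_infty_iff_exists.mp (fun h => hiY (h ▸ hp))
    exact ⟨z, hp⟩
  have hdisj : Disjoint X₀ Y₀ := by
    rw [Set.disjoint_left]
    intro z hz1 hz2
    exact Set.disjoint_left.mp hXY hz1 hz2
  have h1' : (b : ℂ∞) ∈ connectedComponentIn (((↑) '' X₀ : Set ℂ∞))ᶜ (a : ℂ∞) := by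
    rw [hX₀img]; exact h1
  have h2' : (b : ℂ∞) ∈ connectedComponentIn (((↑) '' Y₀ : Set ℂ∞))ᶜ (a : ℂ∞) := by
    rw [hY₀img]; exact h2
  have hEX := hasContLog_of_sphere_comp hX₀cpt hX₀ne haX hbX h1'
  have hEY := hasContLog_of_sphere_comp hY₀cpt hY₀ne haY hbY h2'
  have hE := HasContLog.union hX₀cpt.isClosed hY₀cpt.isClosed hdisj hEX hEY
  have hfin := sphere_comp_of_hasContLog (hX₀cpt.union hY₀cpt)
    (fun h => (h : a ∈ X₀ ∪ Y₀).elim haX haY)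
    (fun h => (h : b ∈ X₀ ∪ Y₀).elim hbX hbY) hE
  rwa [Set.image_union, hX₀img, hY₀img] at hfin

/-- Lemma (Closed Sets Topological Lemma): for disjoint closed sets `X, Y` in the Riemann
sphere and points `x, y` outside `X ∪ Y`, if `x` and `y` are in the same component of `Xᶜ`
and the same component of `Yᶜ`, then they are in the same component of `(X ∪ Y)ᶜ`. -/
theorem stmt0 (X Y : Set (OnePoint ℂ)) (hX : IsClosed X) (hY : IsClosed Y)
    (hXY : Disjoint X Y) (x y : OnePoint ℂ) (hx : x ∉ X ∪ Y) (hy : y ∉ X ∪ Y)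
    (h1 : y ∈ connectedComponentIn Xᶜ x) (h2 : y ∈ connectedComponentIn Yᶜ x) :
    y ∈ connectedComponentIn (X ∪ Y)ᶜ x := by
  rcases X.eq_empty_or_nonempty with rfl | hXne
  · simpa using h2
  rcases Y.eq_empty_or_nonempty with rfl | hYne
  · simpa using h1
  -- find a point outside X ∪ Y ∪ {x, y}
  have hxU : x ∈ (X ∪ Y)ᶜ := hx
  have hopen : IsOpen (X ∪ Y)ᶜ := (hX.union hY).isOpen_compl
  obtain ⟨p, hpU, hpx, hpy⟩ : ∃ p, p ∈ (X ∪ Y)ᶜ ∧ p ≠ x ∧ p ≠ y := by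
    have hmem1 : (X ∪ Y)ᶜ ∈ 𝓝[≠] x := mem_nhdsWithin_of_mem_nhds (hopen.mem_nhds hxU)
    have hmem2 : {y}ᶜ ∈ 𝓝[≠] x := by
      by_cases hxy : y = x
      · subst hxy; exact self_mem_nhdsWithin
      · exact mem_nhdsWithin_of_mem_nhds (isOpen_compl_singleton.mem_nhds (fun h => hxy (by
          simpa using h.symm)))
    have : ((X ∪ Y)ᶜ ∩ ({x}ᶜ ∩ {y}ᶜ)) ∈ 𝓝[≠] x :=
      inter_mem hmem1 (inter_mem self_mem_nhdsWithin hmem2)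
    obtain ⟨p, hp1, hp2, hp3⟩ := Filter.nonempty_of_mem this
    exact ⟨p, hp1, by simpa using hp2, by simpa using hp3⟩
  obtain ⟨m, hmp⟩ := exists_mobius_to_infty p
  have hminj : Function.Injective m := m.injective
  -- transported data
  have hiX' : ∞ ∉ m '' X := by
    rintro ⟨q, hq, he⟩
    rw [← hmp] at he
    exact (hpU (Or.inl ((hminj he) ▸ hq)))
  have hiY' : ∞ ∉ m '' Y := by
    rintro ⟨q, hq, he⟩
    rw [← hmp] at he
    exact (hpU (Or.inr ((hminj he) ▸ hq)))
  have hx' : m x ∉ m '' X ∪ m '' Y := by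
    rintro (⟨q, hq, he⟩ | ⟨q, hq, he⟩)
    · exact hx (Or.inl ((hminj he) ▸ hq))
    · exact hx (Or.inr ((hminj he) ▸ hq))
  have hy' : m y ∉ m '' X ∪ m '' Y := by
    rintro (⟨q, hq, he⟩ | ⟨q, hq, he⟩)
    · exact hy (Or.inl ((hminj he) ▸ hq))
    · exact hy (Or.inr ((hminj he) ▸ hq))
  have hix' : m x ≠ ∞ := by
    rw [← hmp]; exact fun h => hpx (hminj h).symm
  have hiy' : m y ≠ ∞ := by
    rw [← hmp]; exact fun h => hpy (hminj h).symm
  have hcompl : ∀ S : Set ℂ∞, m '' Sᶜ = (m '' S)ᶜ := fun S => m.toEquiv.image_compl S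
  have h1' : m y ∈ connectedComponentIn (m '' X)ᶜ (m x) := by
    have hxX : x ∈ Xᶜ := fun h => hx (Or.inl h)
    rw [← hcompl, ← Homeomorph.image_connectedComponentIn' m hxX]
    exact ⟨y, h1, rfl⟩
  have h2' : m y ∈ connectedComponentIn (m '' Y)ᶜ (m x) := by
    have hxY : x ∈ Yᶜ := fun h => hx (Or.inr h)
    rw [← hcompl, ← Homeomorph.image_connectedComponentIn' m hxY]
    exact ⟨y, h2, rfl⟩
  have hfin := key_finite (m '' X) (m '' Y)
    ((m.isClosed_image).mpr hX) ((m.isClosed_image).mpr hY)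
    (Set.disjoint_image_of_injective hminj hXY) (hXne.image m) (hYne.image m)
    (m x) (m y) hx' hy' hiX' hiY' hix' hiy' h1' h2'
  -- transport back
  have hback : m y ∈ m '' connectedComponentIn (X ∪ Y)ᶜ x := by
    rw [Homeomorph.image_connectedComponentIn' m hxU, hcompl, image_union]
    exact hfin
  obtain ⟨q, hq, he⟩ := hback
  rwa [← hminj he]

end
end

section
/- Let A ⊆ ℂ be open and connected, and let X ⊆ A be a compact set whose complement ℂ \ X is connected. Then A \ X is connected. -/
open Complex Metric Set Bornology Filter

noncomputable section

/-- Distinct integer multiples of `2πi` are at distance `> 1`. -/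
private lemma lattice_dist {n m : ℤ} (h : n ≠ m) :
    1 < dist ((n : ℂ) * (2 * Real.pi * I)) ((m : ℂ) * (2 * Real.pi * I)) := by
  have hnm : (1 : ℝ) ≤ |(n - m : ℤ)| := by
    exact_mod_cast Int.one_le_abs (sub_ne_zero.mpr h)
  have hsub : (n : ℂ) * (2 * Real.pi * I) - (m : ℂ) * (2 * Real.pi * I)
      = ((((n - m : ℤ) : ℝ) * (2 * Real.pi) : ℝ) : ℂ) * I := by push_cast; ring
  rw [dist_eq_norm, hsub, norm_mul, Complex.norm_I, mul_one, Complex.norm_real,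
    Real.norm_eq_abs, abs_mul, _root_.abs_of_nonneg (by positivity : (0:ℝ) ≤ 2 * Real.pi)]
  rw [show |((n - m : ℤ) : ℝ)| = ((|n - m| : ℤ) : ℝ) by push_cast; rfl]
  nlinarith [Real.pi_gt_three]

/-- A continuous function on a preconnected set with values in `2πiℤ` is constant. -/
private lemma const_of_lattice {S : Set ℂ} (hS : IsPreconnected S) {h : ℂ → ℂ}
    (hc : ContinuousOn h S)
    (hint : ∀ z ∈ S, ∃ n : ℤ, h z = (n : ℂ) * (2 * Real.pi * I))
    {x y : ℂ} (hx : x ∈ S) (hy : y ∈ S) : h x = h y := by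
  by_contra hne
  have ht : IsPreconnected (h '' S) := hS.image h hc
  obtain ⟨m, hm⟩ := hint x hx
  set u : Set ℂ := ball (h x) 1 with hu_def
  set v : Set ℂ := {w | 1 < dist w (h x)} with hv_def
  have hu : IsOpen u := isOpen_ball
  have hv : IsOpen v := isOpen_lt continuous_const (continuous_id.dist continuous_const)
  have hcover : h '' S ⊆ u ∪ v := by
    rintro _ ⟨z, hz, rfl⟩
    obtain ⟨n, hn⟩ := hint z hz
    by_cases hmn : n = m
    · left; rw [mem_ball, hn, hm, hmn]; simpa using one_pos
    · right
      show 1 < dist (h z) (h x)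
      rw [hn, hm]
      exact lattice_dist hmn
  have hxu : h x ∈ h '' S ∩ u := ⟨mem_image_of_mem h hx, mem_ball_self one_pos⟩
  have hyv : h y ∈ h '' S ∩ v := by
    refine ⟨mem_image_of_mem h hy, ?_⟩
    obtain ⟨n, hn⟩ := hint y hy
    have hmn : n ≠ m := by
      rintro rfl; exact hne (hm.trans hn.symm)
    show 1 < dist (h y) (h x)
    rw [hn, hm]
    exact lattice_dist hmn
  obtain ⟨w, -, hw1, hw2⟩ := ht u v hu hv hcover ⟨_, hxu⟩ ⟨_, hyv⟩
  have h1 : dist w (h x) < 1 := mem_ball.mp hw1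
  have h2 : 1 < dist w (h x) := hw2
  linarith

/-- A continuous nonvanishing function on `ℂ` has a continuous logarithm on any closed ball. -/
private lemma exists_log_on_closedBall (f : ℂ → ℂ) (hf : Continuous f) (h0 : ∀ z, f z ≠ 0)
    (R : ℝ) : ∃ g : ℂ → ℂ, ContinuousOn g (closedBall (0 : ℂ) R) ∧
      ∀ z ∈ closedBall (0 : ℂ) R, Complex.exp (g z) = f z := by
  by_cases hR : R < 0
  · exact ⟨0, continuousOn_const, fun z hz => absurd hz (by simp [closedBall_eq_empty.mpr hR])⟩
  push_neg at hR
  set Q : Set ℂ := closedBall (0 : ℂ) R with hQ_def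
  have hQc : IsCompact Q := isCompact_closedBall _ _
  have hQne : Q.Nonempty := ⟨0, mem_closedBall_self hR⟩
  -- minimum of ‖f‖ on Q
  obtain ⟨z₀, hz₀Q, hz₀⟩ := hQc.exists_isMinOn hQne (continuous_norm.comp hf).continuousOn
  set ε : ℝ := ‖f z₀‖ with hε_def
  have hε : 0 < ε := norm_pos_iff.mpr (h0 z₀)
  have hmin : ∀ z ∈ Q, ε ≤ ‖f z‖ := fun z hz => hz₀ hz
  -- uniform continuity
  have huc := hQc.uniformContinuousOn_of_continuous hf.continuousOn
  rw [Metric.uniformContinuousOn_iff] at huc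
  obtain ⟨δ, hδ, hδ'⟩ := huc ε hε
  obtain ⟨N, hN⟩ := exists_nat_gt (R / δ)
  have hN0 : 0 < N := by
    have : (0 : ℝ) ≤ R / δ := div_nonneg hR hδ.le
    exact_mod_cast lt_of_le_of_lt this hN
  have hNR : R / N < δ := by
    have h1 := (div_lt_iff₀ hδ).mp hN
    rw [div_lt_iff₀ (show (0:ℝ) < (N:ℝ) by exact_mod_cast hN0)]
    linarith
  have hsmul : ∀ (s : ℝ), 0 ≤ s → s ≤ 1 → ∀ z ∈ Q, s • z ∈ Q := by
    intro s h0s h1s z hz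
    rw [hQ_def, mem_closedBall, dist_zero_right] at hz ⊢
    rw [norm_smul, Real.norm_eq_abs, _root_.abs_of_nonneg h0s]
    nlinarith [norm_nonneg z]
  have main : ∀ i : ℕ, i ≤ N → ∃ g : ℂ → ℂ, ContinuousOn g Q ∧
      ∀ z ∈ Q, Complex.exp (g z) = f (((i : ℝ) / N) • z) := by
    intro i
    induction i with
    | zero =>
      intro _
      refine ⟨fun _ => Complex.log (f 0), continuousOn_const, fun z _ => ?_⟩
      simp [Complex.exp_log (h0 0)]
    | succ i ih =>
      intro hiN
      obtain ⟨g, hgc, hg⟩ := ih (Nat.le_of_succ_le hiN)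
      set s : ℝ := (i : ℝ) / N with hs_def
      set s' : ℝ := ((i + 1 : ℕ) : ℝ) / N with hs'_def
      have hNpos : (0 : ℝ) < N := by exact_mod_cast hN0
      have h0s : 0 ≤ s := div_nonneg (by positivity) hNpos.le
      have h1s : s ≤ 1 := by
        rw [hs_def, div_le_one hNpos]
        exact_mod_cast Nat.le_of_succ_le hiN
      have h0s' : 0 ≤ s' := div_nonneg (by positivity) hNpos.le
      have h1s' : s' ≤ 1 := by
        rw [hs'_def, div_le_one hNpos]
        exact_mod_cast hiN
      have hss' : s' - s = 1 / N := by
        rw [hs_def, hs'_def]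
        push_cast
        field_simp
        ring
      have hclose : ∀ z ∈ Q, dist (f (s' • z)) (f (s • z)) < ε := by
        intro z hz
        refine hδ' _ (hsmul s' h0s' h1s' z hz) _ (hsmul s h0s h1s z hz) ?_
        rw [dist_eq_norm, ← sub_smul, hss', norm_smul, Real.norm_eq_abs]
        have hzR : ‖z‖ ≤ R := by
          rw [hQ_def, mem_closedBall, dist_zero_right] at hz; exact hz
        calc |1 / (N : ℝ)| * ‖z‖ ≤ (1 / N) * R := by
              apply mul_le_mul _ hzR (norm_nonneg z) (by positivity)
              rw [_root_.abs_of_nonneg (by positivity)]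
          _ = R / N := by ring
          _ < δ := hNR
      set r : ℂ → ℂ := fun z => f (s' • z) / f (s • z) with hr_def
      have hrne : ∀ z, r z ≠ 0 := fun z => div_ne_zero (h0 _) (h0 _)
      have hrnorm : ∀ z ∈ Q, ‖r z - 1‖ < 1 := by
        intro z hz
        have hd : ‖f (s' • z) - f (s • z)‖ < ε := by
          rw [← dist_eq_norm]; exact hclose z hz
        have hden : ε ≤ ‖f (s • z)‖ := hmin _ (hsmul s h0s h1s z hz)
        have hden0 : (0 : ℝ) < ‖f (s • z)‖ := lt_of_lt_of_le hε hden
        have : r z - 1 = (f (s' • z) - f (s • z)) / f (s • z) := by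
          simp only [hr_def]
          exact div_sub_one (h0 _)
        rw [this, norm_div, div_lt_one hden0]
        exact lt_of_lt_of_le hd hden
      have hslit : ∀ z ∈ Q, r z ∈ Complex.slitPlane := by
        intro z hz
        have := Complex.mem_slitPlane_of_norm_lt_one (hrnorm z hz)
        rwa [add_sub_cancel] at this
      have hrcont : ∀ z, ContinuousAt r z := by
        intro z
        exact ((hf.comp (continuous_const_smul s')).continuousAt).div
          ((hf.comp (continuous_const_smul s)).continuousAt) (h0 _)
      refine ⟨fun z => g z + Complex.log (r z), ?_, ?_⟩
      · refine hgc.add fun z hz => ?_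
        exact ((continuousAt_clog (hslit z hz)).comp (hrcont z)).continuousWithinAt
      · intro z hz
        rw [Complex.exp_add, hg z hz, Complex.exp_log (hrne z), hr_def]
        show f (s • z) * (f (s' • z) / f (s • z)) = f (s' • z)
        rw [← mul_div_assoc]
        exact mul_div_cancel_left₀ _ (h0 _)
  obtain ⟨g, hgc, hg⟩ := main N le_rfl
  refine ⟨g, hgc, fun z hz => ?_⟩
  have := hg z hz
  rwa [div_self (by exact_mod_cast hN0.ne' : (N : ℝ) ≠ 0), one_smul] at this

/-- If `A ⊆ ℂ` is open and connected and `X ⊆ A` is compact with connected complement,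
then `A \ X` is connected. -/
theorem stmt1 (A X : Set ℂ) (hA : IsOpen A) (hAc : IsConnected A) (hXA : X ⊆ A)
    (hX : IsCompact X) (hXc : IsConnected Xᶜ) : IsConnected (A \ X) := by
  classical
  have hXcl : IsClosed X := hX.isClosed
  have hSopen : IsOpen (A \ X) := hA.sdiff hXcl
  -- `A \ X` is nonempty
  have hSne : (A \ X).Nonempty := by
    by_contra h
    rw [Set.not_nonempty_iff_eq_empty, Set.diff_eq_empty] at h
    have hAX : A = X := le_antisymm h hXA
    have hclop : IsClopen A := ⟨hAX ▸ hXcl, hA⟩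
    have huniv : A = Set.univ := hclop.eq_univ hAc.nonempty
    have hcu : IsCompact (Set.univ : Set ℂ) := by rw [← huniv, hAX]; exact hX
    obtain ⟨r, hr⟩ := hcu.isBounded.subset_closedBall 0
    have := hr (Set.mem_univ ((r + 1 : ℝ) : ℂ))
    rw [mem_closedBall, dist_zero_right, Complex.norm_real, Real.norm_eq_abs] at this
    have := le_abs_self (r + 1)
    linarith
  refine ⟨hSne, ?_⟩
  rintro u v hu hv hcover ⟨p, hpS, hpu⟩ ⟨q, hqS, hqv⟩
  by_contra hne
  rw [Set.not_nonempty_iff_eq_empty] at hne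
  set G₁ : Set ℂ := (A \ X) ∩ u with hG₁_def
  set G₂ : Set ℂ := (A \ X) ∩ v with hG₂_def
  have hG₁o : IsOpen G₁ := hSopen.inter hu
  have hG₂o : IsOpen G₂ := hSopen.inter hv
  have hdisj : ∀ z, z ∈ G₁ → z ∉ G₂ := by
    intro z h1 h2
    have : z ∈ (A \ X) ∩ (u ∩ v) := ⟨h1.1, h1.2, h2.2⟩
    rw [hne] at this
    exact this
  have hsplit : ∀ z ∈ A \ X, z ∈ G₁ ∨ z ∈ G₂ := by
    intro z hz
    rcases hcover hz with h | h
    · exact Or.inl ⟨hz, h⟩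
    · exact Or.inr ⟨hz, h⟩
  have hpG₁ : p ∈ G₁ := ⟨hpS, hpu⟩
  have hqG₂ : q ∈ G₂ := ⟨hqS, hqv⟩
  -- Urysohn function
  obtain ⟨φ, hφ0, hφ1, hφ01⟩ := exists_continuous_zero_one_of_isClosed
    hA.isClosed_compl hXcl
    (Set.disjoint_left.mpr fun z hz hzX => hz (hXA hzX))
  set c : ℂ → ℝ := fun z => if z ∈ G₁ then (1 : ℝ) else 0 with hc_def
  have hc01 : ∀ z, 0 ≤ c z ∧ c z ≤ 1 := by
    intro z; rw [hc_def]; dsimp only; split <;> norm_num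
  set a : ℂ → ℝ := fun z => (1 - φ z) * c z with ha_def
  set b : ℂ → ℝ := fun z => -(φ z * c z) with hb_def
  -- continuity of `a` on `A`
  have haA : ∀ z ∈ A, ContinuousAt a z := by
    intro z hz
    by_cases hz1 : z ∈ G₁
    · have hbase : ContinuousAt (fun w => 1 - φ w) z :=
        (continuous_const.sub φ.continuous).continuousAt
      apply hbase.congr
      filter_upwards [hG₁o.mem_nhds hz1] with w hw
      simp only [ha_def, hc_def, if_pos hw, mul_one]
    by_cases hz2 : z ∈ G₂
    · have hbase : ContinuousAt (fun _ : ℂ => (0:ℝ)) z := continuousAt_const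
      apply hbase.congr
      filter_upwards [hG₂o.mem_nhds hz2] with w hw
      have hw1 : w ∉ G₁ := fun h => hdisj w h hw
      simp only [ha_def, hc_def, if_neg hw1, mul_zero]
    · have hzX : z ∈ X := by
        by_contra hzX
        rcases hsplit z ⟨hz, hzX⟩ with h | h
        exacts [hz1 h, hz2 h]
      have hφz : φ z = 1 := hφ1 hzX
      have htend : Filter.Tendsto a (nhds z) (nhds 0) := by
        apply squeeze_zero' (g := fun w => 1 - φ w)
        · filter_upwards with w
          exact mul_nonneg (by linarith [(hφ01 w).2]) (hc01 w).1
        · filter_upwards with w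
          calc (1 - φ w) * c w ≤ (1 - φ w) * 1 :=
                mul_le_mul_of_nonneg_left (hc01 w).2 (by linarith [(hφ01 w).2])
            _ = 1 - φ w := mul_one _
        · have : Filter.Tendsto (fun w => 1 - φ w) (nhds z) (nhds (1 - φ z)) :=
            (continuous_const.sub φ.continuous).continuousAt
          rwa [hφz, sub_self] at this
      have haz : a z = 0 := by rw [ha_def]; dsimp only; rw [hφz]; ring
      unfold ContinuousAt
      rw [haz]
      exact htend
  -- continuity of `b` on `Xᶜ`
  have hbXc : ∀ z ∈ Xᶜ, ContinuousAt b z := by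
    intro z hz
    by_cases hz1 : z ∈ G₁
    · have hbase : ContinuousAt (fun w => -(φ w * 1)) z :=
        ((φ.continuous.mul continuous_const).neg).continuousAt
      apply hbase.congr
      filter_upwards [hG₁o.mem_nhds hz1] with w hw
      simp only [hb_def, hc_def, if_pos hw]
    by_cases hz2 : z ∈ G₂
    · have hbase : ContinuousAt (fun _ : ℂ => (0:ℝ)) z := continuousAt_const
      apply hbase.congr
      filter_upwards [hG₂o.mem_nhds hz2] with w hw
      have hw1 : w ∉ G₁ := fun h => hdisj w h hw
      simp only [hb_def, hc_def, if_neg hw1, mul_zero, neg_zero]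
    · have hzA : z ∉ A := by
        intro hzA
        rcases hsplit z ⟨hzA, hz⟩ with h | h
        exacts [hz1 h, hz2 h]
      have hφz : φ z = 0 := hφ0 hzA
      have htend : Filter.Tendsto (fun w => φ w * c w) (nhds z) (nhds 0) := by
        apply squeeze_zero' (g := fun w => φ w)
        · filter_upwards with w
          exact mul_nonneg (hφ01 w).1 (hc01 w).1
        · filter_upwards with w
          calc φ w * c w ≤ φ w * 1 :=
                mul_le_mul_of_nonneg_left (hc01 w).2 (hφ01 w).1
            _ = φ w := mul_one _
        · have : Filter.Tendsto (fun w => φ w) (nhds z) (nhds (φ z)) :=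
            φ.continuous.continuousAt
          rwa [hφz] at this
      have hbz : b z = 0 := by rw [hb_def]; dsimp only; rw [hφz]; ring
      unfold ContinuousAt
      rw [hbz]
      have : Filter.Tendsto b (nhds z) (nhds (-0)) := htend.neg
      rwa [neg_zero] at this
  -- the circle-valued gluing
  set e : ℝ → ℂ := fun t => Complex.exp ((t : ℂ) * (2 * Real.pi * I)) with he_def
  have he_cont : Continuous e :=
    Complex.continuous_exp.comp (Complex.continuous_ofReal.mul continuous_const)
  have he_add1 : ∀ t : ℝ, e (t + 1) = e t := by
    intro t
    rw [he_def]
    dsimp only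
    rw [show ((t + 1 : ℝ) : ℂ) * (2 * Real.pi * I)
        = (t : ℂ) * (2 * Real.pi * I) + 2 * Real.pi * I by push_cast; ring,
      Complex.exp_add, Complex.exp_two_pi_mul_I, mul_one]
  set f : ℂ → ℂ := fun z => if z ∈ A then e (a z) else e (b z) with hf_def
  have hfA : ∀ w ∈ A, f w = e (a w) := fun w hw => by rw [hf_def]; simp [hw]
  have hab : ∀ w, a w = b w + c w := by
    intro w
    show (1 - φ w) * c w = -(φ w * c w) + c w
    ring
  have hfXc : ∀ w ∈ Xᶜ, f w = e (b w) := by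
    intro w hw
    rw [hf_def]
    dsimp only
    split
    · next hwA =>
      rcases hsplit w ⟨hwA, hw⟩ with h | h
      · have hcw : c w = 1 := by rw [hc_def]; simp [h]
        rw [hab w, hcw, he_add1]
      · have hw1 : w ∉ G₁ := fun hh => hdisj w hh h
        have hcw : c w = 0 := by simp only [hc_def]; rw [if_neg hw1]
        rw [hab w, hcw, add_zero]
    · rfl
  have hf_cont : Continuous f := by
    rw [continuous_iff_continuousAt]
    intro z
    by_cases hz : z ∈ A
    · apply ContinuousAt.congr (he_cont.continuousAt.comp (haA z hz))
      filter_upwards [hA.mem_nhds hz] with w hw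
      exact (hfA w hw).symm
    · have hzXc : z ∈ Xᶜ := fun hzX => hz (hXA hzX)
      apply ContinuousAt.congr (he_cont.continuousAt.comp (hbXc z hzXc))
      filter_upwards [hXcl.isOpen_compl.mem_nhds hzXc] with w hw
      exact (hfXc w hw).symm
  have hf_ne : ∀ z, f z ≠ 0 := by
    intro z
    rw [hf_def]
    dsimp only
    split <;> exact Complex.exp_ne_zero _
  -- paths
  have hApath : IsPathConnected A := hA.isConnected_iff_isPathConnected.mp hAc
  have hXcpath : IsPathConnected Xᶜ := hXcl.isOpen_compl.isConnected_iff_isPathConnected.mp hXc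
  have hpA : p ∈ A := hpS.1
  have hqA : q ∈ A := hqS.1
  have hpXc : p ∈ Xᶜ := hpS.2
  have hqXc : q ∈ Xᶜ := hqS.2
  obtain ⟨γA, hγA⟩ := hApath.joinedIn p hpA q hqA
  obtain ⟨γX, hγX⟩ := hXcpath.joinedIn p hpXc q hqXc
  set P₁ : Set ℂ := Set.range γA with hP₁_def
  set P₂ : Set ℂ := Set.range γX with hP₂_def
  have hP₁c : IsCompact P₁ := isCompact_range γA.continuous
  have hP₂c : IsCompact P₂ := isCompact_range γX.continuous
  have hP₁conn : IsPreconnected P₁ := isPreconnected_range γA.continuous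
  have hP₂conn : IsPreconnected P₂ := isPreconnected_range γX.continuous
  have hP₁A : P₁ ⊆ A := Set.range_subset_iff.mpr hγA
  have hP₂Xc : P₂ ⊆ Xᶜ := Set.range_subset_iff.mpr hγX
  have hpP₁ : p ∈ P₁ := ⟨0, γA.source⟩
  have hqP₁ : q ∈ P₁ := ⟨1, γA.target⟩
  have hpP₂ : p ∈ P₂ := ⟨0, γX.source⟩
  have hqP₂ : q ∈ P₂ := ⟨1, γX.target⟩
  obtain ⟨R, hR⟩ := (hP₁c.union hP₂c).isBounded.subset_closedBall 0
  have hP₁Q : P₁ ⊆ closedBall (0 : ℂ) R := fun z hz => hR (Or.inl hz)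
  have hP₂Q : P₂ ⊆ closedBall (0 : ℂ) R := fun z hz => hR (Or.inr hz)
  -- logarithm
  obtain ⟨g, hgc, hg⟩ := exists_log_on_closedBall f hf_cont hf_ne R
  -- the two lattice-valued functions
  set h₁ : ℂ → ℂ := fun z => g z - (a z : ℂ) * (2 * Real.pi * I) with hh₁_def
  set h₂ : ℂ → ℂ := fun z => g z - (b z : ℂ) * (2 * Real.pi * I) with hh₂_def
  have hlat₁ : ∀ z ∈ P₁, ∃ n : ℤ, h₁ z = (n : ℂ) * (2 * Real.pi * I) := by
    intro z hz
    have h1 : Complex.exp (g z) = f z := hg z (hP₁Q hz)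
    have h2 : f z = e (a z) := hfA z (hP₁A hz)
    rw [h2, he_def] at h1
    obtain ⟨n, hn⟩ := Complex.exp_eq_exp_iff_exists_int.mp h1
    exact ⟨n, by rw [hh₁_def]; dsimp only; rw [hn]; ring⟩
  have hlat₂ : ∀ z ∈ P₂, ∃ n : ℤ, h₂ z = (n : ℂ) * (2 * Real.pi * I) := by
    intro z hz
    have h1 : Complex.exp (g z) = f z := hg z (hP₂Q hz)
    have h2 : f z = e (b z) := hfXc z (hP₂Xc hz)
    rw [h2, he_def] at h1
    obtain ⟨n, hn⟩ := Complex.exp_eq_exp_iff_exists_int.mp h1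
    exact ⟨n, by rw [hh₂_def]; dsimp only; rw [hn]; ring⟩
  have hc₁ : ContinuousOn h₁ P₁ := by
    apply (hgc.mono hP₁Q).sub
    intro z hz
    exact (((Complex.continuous_ofReal.continuousAt.comp
      (haA z (hP₁A hz))).mul continuousAt_const)).continuousWithinAt
  have hc₂ : ContinuousOn h₂ P₂ := by
    apply (hgc.mono hP₂Q).sub
    intro z hz
    exact (((Complex.continuous_ofReal.continuousAt.comp
      (hbXc z (hP₂Xc hz))).mul continuousAt_const)).continuousWithinAt
  have heq₁ : h₁ p = h₁ q := const_of_lattice hP₁conn hc₁ hlat₁ hpP₁ hqP₁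
  have heq₂ : h₂ p = h₂ q := const_of_lattice hP₂conn hc₂ hlat₂ hpP₂ hqP₂
  -- contradiction
  have hcp : c p = 1 := by rw [hc_def]; simp [hpG₁]
  have hcq : c q = 0 := by
    have hq1 : q ∉ G₁ := fun hh => hdisj q hh hqG₂
    simp only [hc_def]; rw [if_neg hq1]
  have hdiff : ∀ z, z ∉ X → h₂ z - h₁ z = (c z : ℂ) * (2 * Real.pi * I) := by
    intro z hz
    rw [hh₁_def, hh₂_def]
    dsimp only
    rw [hab z]
    push_cast
    ring
  have hdp : h₂ p - h₁ p = 2 * Real.pi * I := by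
    rw [hdiff p hpXc, hcp]; push_cast; ring
  have hdq : h₂ q - h₁ q = 0 := by
    rw [hdiff q hqXc, hcq]; push_cast; ring
  have : (2 * Real.pi * I : ℂ) = 0 := by
    rw [← hdp, heq₁, heq₂, hdq]
  simp [Real.pi_ne_zero, Complex.I_ne_zero] at this

end
end

section
/- The critical points of a nonconstant complex polynomial lie in the convex hull of its roots (Gauss–Lucas theorem). -/
open Polynomial

/-- Gauss–Lucas theorem: the critical points of a nonconstant complex polynomial lie in
the convex hull of its roots. -/
theorem stmt8 (p : Polynomial ℂ) (hp : 0 < p.natDegree) (z : ℂ)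
    (hz : (Polynomial.derivative p).eval z = 0) :
    z ∈ convexHull ℝ {w : ℂ | p.IsRoot w} := by
  classical
  by_cases hpz : p.IsRoot z
  · exact subset_convexHull ℝ _ hpz
  have hp0 : p ≠ 0 := fun h => by simp [h] at hp
  set R := p.roots with hR
  have hcard : R.card = p.natDegree :=
    (Polynomial.splits_iff_card_roots).1 (IsAlgClosed.splits p)
  have hRne : R ≠ 0 := by
    intro h; rw [h] at hcard; simp at hcard; omega
  have hroot : ∀ r ∈ R, p.IsRoot r := fun r hr => (Polynomial.mem_roots hp0).1 hr
  have hzr : ∀ r ∈ R, z - r ≠ 0 := by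
    intro r hr h
    exact hpz (sub_eq_zero.mp h ▸ hroot r hr)
  set q : Polynomial ℂ := (R.map fun a => X - C a).prod with hq
  have hpeq : p = C p.leadingCoeff * q :=
    (IsAlgClosed.splits p).eq_prod_roots
  have hqz : q.eval z = (R.map fun a => z - a).prod := by
    simp [hq, Polynomial.eval_multiset_prod, Multiset.map_map, Function.comp]
  have hqz0 : q.eval z ≠ 0 := by
    rw [hqz]
    exact Multiset.prod_ne_zero (by
      intro h
      obtain ⟨r, hr, hzr'⟩ := Multiset.mem_map.1 h
      exact hzr r hr hzr')
  -- the evaluated derivative of q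
  have hdq : (Polynomial.derivative q).eval z
      = (R.map fun r => q.eval z * (z - r)⁻¹).sum := by
    rw [hq, Polynomial.derivative_prod]
    rw [← Polynomial.coe_evalRingHom, map_multiset_sum, Multiset.map_map]
    congr 1
    refine Multiset.map_congr rfl fun r hr => ?_
    simp only [Function.comp_apply, Polynomial.derivative_X_sub_C, Polynomial.coe_evalRingHom,
      Polynomial.eval_mul, Polynomial.eval_one, mul_one, Polynomial.eval_multiset_prod,
      Multiset.map_map, Polynomial.eval_sub, Polynomial.eval_X, Polynomial.eval_C]
    have hfac : q.eval z = (z - r) * (Multiset.map ((fun a => z - a)) (R.erase r)).prod := by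
      rw [hqz]
      conv_lhs => rw [← Multiset.cons_erase hr]
      rw [Multiset.map_cons, Multiset.prod_cons]
    rw [← hqz, hfac, mul_comm (z - r), mul_assoc, mul_inv_cancel₀ (hzr r hr), mul_one]
  have hderiv0 : (Polynomial.derivative q).eval z = 0 := by
    have : Polynomial.derivative p = C p.leadingCoeff * Polynomial.derivative q := by
      conv_lhs => rw [hpeq]
      rw [Polynomial.derivative_mul, Polynomial.derivative_C, zero_mul, zero_add]
    rw [this] at hz
    simp only [Polynomial.eval_mul, Polynomial.eval_C, mul_eq_zero] at hz
    rcases hz with h | h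
    · exact absurd h (Polynomial.leadingCoeff_ne_zero.2 hp0)
    · exact h
  have hsum : (R.map fun r => (z - r)⁻¹).sum = 0 := by
    have := hdq.symm.trans hderiv0
    rw [Multiset.sum_map_mul_left] at this
    exact (mul_eq_zero.1 this).resolve_left hqz0
  -- conjugate
  have hsum2 : (R.map fun r => ((Complex.normSq (z - r))⁻¹ : ℝ) • (z - r)).sum = 0 := by
    have := congrArg (starRingEnd ℂ) hsum
    rw [map_multiset_sum, Multiset.map_map, map_zero] at this
    rw [← this]
    congr 1
    refine Multiset.map_congr rfl fun r hr => ?_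
    simp only [Function.comp_apply, map_inv₀]
    rw [Complex.inv_def, Complex.normSq_conj, Complex.conj_conj,
      Complex.real_smul, Complex.ofReal_inv, mul_comm]
  -- move to a finset sum
  set s : Finset ℂ := R.toFinset with hs
  set w : ℂ → ℝ := fun r => (R.count r : ℝ) * (Complex.normSq (z - r))⁻¹ with hw
  have hsum3 : ∑ r ∈ s, (w r : ℂ) * (z - r) = 0 := by
    rw [← hsum2, Finset.sum_multiset_map_count]
    refine Finset.sum_congr rfl fun r hr => ?_
    rw [← Nat.cast_smul_eq_nsmul ℝ, smul_smul, ← Complex.real_smul]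
  have hwpos : ∀ r ∈ s, 0 < w r := by
    intro r hr
    have hrR : r ∈ R := Multiset.mem_toFinset.1 hr
    have h1 : 0 < (R.count r : ℝ) := by
      have := Multiset.count_pos.2 hrR; positivity
    have h2 : 0 < (Complex.normSq (z - r))⁻¹ := by
      have := Complex.normSq_pos.2 (hzr r hrR); positivity
    exact mul_pos h1 h2
  have hsne : s.Nonempty := by
    obtain ⟨r, hr⟩ := Multiset.exists_mem_of_ne_zero hRne
    exact ⟨r, Multiset.mem_toFinset.2 hr⟩
  have hW : 0 < ∑ r ∈ s, w r := Finset.sum_pos hwpos hsne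
  have hcm : s.centerMass w id = z := by
    rw [Finset.centerMass]
    have hzz : (↑(∑ r ∈ s, w r) : ℂ) * z = ∑ r ∈ s, (w r : ℂ) * r := by
      have expand : ∑ r ∈ s, (w r : ℂ) * (z - r)
          = (↑(∑ r ∈ s, w r) : ℂ) * z - ∑ r ∈ s, (w r : ℂ) * r := by
        push_cast
        rw [Finset.sum_mul]
        rw [← Finset.sum_sub_distrib]
        congr 1; ext r; ring
      rw [expand] at hsum3
      linear_combination hsum3
    have : ∑ r ∈ s, w r • id r = (↑(∑ r ∈ s, w r) : ℂ) * z := by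
      rw [hzz]
      refine Finset.sum_congr rfl fun r hr => ?_
      rw [Complex.real_smul]; rfl
    rw [this, Complex.real_smul]
    rw [← mul_assoc]
    push_cast
    rw [inv_mul_cancel₀ (by exact_mod_cast hW.ne')]
    ring
  rw [← hcm]
  exact Finset.centerMass_mem_convexHull s (fun r hr => (hwpos r hr).le) hW
    (fun r hr => hroot r (Multiset.mem_toFinset.1 hr))
end

section
/- Let f be a nonconstant holomorphic function on an open set containing the closure of a bounded open connected set G ⊆ ℂ. For any ε > 0, the level set {z ∈ G : |f(z)| = ε} has finitely many connected components whose closure is contained in G, provided no component of the level set meets ∂G. -/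
open Set Metric

/-- The star-shaped set `{w ∈ B(0,ρ) | Re (w^n) = 0}` is preconnected. -/
lemma star_preconn (n : ℕ) (hn : n ≠ 0) (ρ : ℝ) :
    IsPreconnected {w : ℂ | w ∈ Metric.ball (0 : ℂ) ρ ∧ (w ^ n).re = 0} := by
  apply isPreconnected_of_forall (0 : ℂ)
  intro y hy
  refine ⟨segment ℝ 0 y, ?_, left_mem_segment ℝ 0 y, right_mem_segment ℝ 0 y,
    (convex_segment (0 : ℂ) y).isPreconnected⟩
  intro z hz
  rw [segment_eq_image] at hz
  obtain ⟨θ, hθ, rfl⟩ := hz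
  constructor
  · rw [mem_ball_zero_iff]
    have h1 : ‖(1 - θ) • (0 : ℂ) + θ • y‖ = |θ| * ‖y‖ := by
      simp [norm_smul, Real.norm_eq_abs]
    rw [h1]
    have hθ1 : |θ| ≤ 1 := by
      rw [abs_le]; constructor <;> [linarith [hθ.1]; linarith [hθ.2]]
    have := mem_ball_zero_iff.mp hy.1
    calc |θ| * ‖y‖ ≤ 1 * ‖y‖ := by
          exact mul_le_mul_of_nonneg_right hθ1 (norm_nonneg _)
      _ = ‖y‖ := one_mul _
      _ < ρ := this
  · show (((1 - θ) • (0 : ℂ) + θ • y) ^ n).re = 0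
    have h2 : (1 - θ) • (0 : ℂ) + θ • y = (θ : ℂ) * y := by
      simp [Complex.real_smul]
    rw [h2, mul_pow, ← Complex.ofReal_pow, Complex.re_ofReal_mul, hy.2, mul_zero]

/-- Local connectivity of the level set of `|f|` at a point of the level set. -/
lemma local_conn {f : ℂ → ℂ} {G : Set ℂ} (hG : IsOpen G) {ε : ℝ} (hε : 0 < ε)
    {z₀ : ℂ} (hfa : AnalyticAt ℂ f z₀) (hz₀G : z₀ ∈ G) (hz₀ : ‖f z₀‖ = ε) :
    ∃ N : Set ℂ, IsOpen N ∧ z₀ ∈ N ∧ N ⊆ G ∧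
      IsPreconnected ({z ∈ G | ‖f z‖ = ε} ∩ N) := by
  have hc : f z₀ ≠ 0 := by
    intro h0
    rw [h0, norm_zero] at hz₀
    exact hε.ne hz₀
  set h : ℂ → ℂ := fun z => Complex.log (f z / f z₀) with hhdef
  have hh : AnalyticAt ℂ h z₀ :=
    (hfa.div analyticAt_const hc).clog (by simp [div_self hc])
  have hh0 : h z₀ = 0 := by simp [hhdef, div_self hc]
  have key : ∀ z : ℂ, f z ≠ 0 → (‖f z‖ = ε ↔ (h z).re = 0) := by
    intro z hz
    have h1 : Complex.exp (h z) = f z / f z₀ := Complex.exp_log (div_ne_zero hz hc)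
    have h2 : Real.exp ((h z).re) = ‖f z‖ / ε := by
      rw [← Complex.norm_exp, h1, norm_div, hz₀]
    constructor
    · intro hzε
      have : Real.exp ((h z).re) = 1 := by rw [h2, hzε, div_self hε.ne']
      exact Real.exp_injective (by rw [this, Real.exp_zero])
    · intro hre
      have : ‖f z‖ / ε = 1 := by rw [← h2, hre, Real.exp_zero]
      exact (div_eq_one_iff_eq hε.ne').mp this
  by_cases htop : analyticOrderAt h z₀ = ⊤
  · -- f has constant modulus near z₀
    have hev : ∀ᶠ z in nhds z₀, z ∈ G ∧ f z ≠ 0 ∧ h z = 0 := by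
      filter_upwards [hG.mem_nhds hz₀G, hfa.continuousAt.eventually_ne hc,
        analyticOrderAt_eq_top.mp htop] with z h1 h2 h3
      exact ⟨h1, h2, h3⟩
    obtain ⟨r, hr0, hrsub⟩ := Metric.mem_nhds_iff.mp hev
    refine ⟨Metric.ball z₀ r, Metric.isOpen_ball, Metric.mem_ball_self hr0,
      fun z hz => (hrsub hz).1, ?_⟩
    have : {z ∈ G | ‖f z‖ = ε} ∩ Metric.ball z₀ r = Metric.ball z₀ r := by
      apply Set.inter_eq_right.mpr
      intro z hz
      obtain ⟨h1, h2, h3⟩ := hrsub hz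
      exact ⟨h1, (key z h2).mpr (by rw [h3]; rfl)⟩
    rw [this]
    exact (convex_ball z₀ r).isPreconnected
  · -- nonconstant case
    set n : ℕ := (analyticOrderAt h z₀).toNat with hndef
    have hn : (n : ℕ∞) = analyticOrderAt h z₀ := ENat.coe_toNat htop
    obtain ⟨u, hu, hu0, hhu⟩ := (hh.analyticOrderAt_eq_natCast (n := n)).mp hn.symm
    have hn0 : n ≠ 0 := by
      intro h0
      have := hhu.self_of_nhds
      rw [h0, pow_zero, one_smul, hh0] at this
      exact hu0 this.symm
    obtain ⟨d, hd⟩ := IsAlgClosed.exists_pow_nat_eq (u z₀) (Nat.pos_of_ne_zero hn0)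
    have hd0 : d ≠ 0 := by
      intro h0
      apply hu0
      rw [← hd, h0, zero_pow hn0]
    have hncast : (n : ℂ) ≠ 0 := Nat.cast_ne_zero.mpr hn0
    set v : ℂ → ℂ := fun z => d * Complex.exp (Complex.log (u z / u z₀) / n) with hvdef
    have hv : AnalyticAt ℂ v z₀ := by
      apply analyticAt_const.mul
      exact (((hu.div analyticAt_const hu0).clog (by simp [div_self hu0])).div
        analyticAt_const hncast).cexp
    have hvz : v z₀ = d := by simp [hvdef, div_self hu0]
    have hvpow : ∀ᶠ z in nhds z₀, v z ^ n = u z := by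
      filter_upwards [hu.continuousAt.eventually_ne hu0] with z hz
      have hexp : Complex.exp (Complex.log (u z / u z₀) / n) ^ n = u z / u z₀ := by
        rw [← Complex.exp_nat_mul, mul_div_cancel₀ _ hncast,
          Complex.exp_log (div_ne_zero hz hu0)]
      rw [hvdef]
      simp only
      rw [mul_pow, hd, hexp]
      field_simp
    obtain ⟨p, hp⟩ := hv
    have hvd : HasStrictDerivAt v (p 1 fun _ => 1) z₀ := hp.hasStrictDerivAt
    have hφd : HasStrictDerivAt (fun z => (z - z₀) * v z) d z₀ := by
      have h1 : HasStrictDerivAt (fun z => (z - z₀) * v z)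
          ((1 - 0) * v z₀ + (z₀ - z₀) * ((p 1) fun _ => 1)) z₀ :=
        HasStrictDerivAt.mul ((hasStrictDerivAt_id z₀).sub (hasStrictDerivAt_const z₀ z₀)) hvd
      have h2 : ((1 : ℂ) - 0) * v z₀ + (z₀ - z₀) * ((p 1) fun _ => 1) = d := by rw [hvz]; ring
      exact h2 ▸ h1
    have hE := hφd.hasStrictFDerivAt_equiv hd0
    set Φ := HasStrictFDerivAt.toOpenPartialHomeomorph (fun z => (z - z₀) * v z) hE with hΦdef
    have hΦcoe : ⇑Φ = fun z => (z - z₀) * v z := rfl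
    have hz₀src : z₀ ∈ Φ.source := HasStrictFDerivAt.mem_toOpenPartialHomeomorph_source hE
    have hev : ∀ᶠ z in nhds z₀,
        z ∈ G ∧ f z ≠ 0 ∧ h z = ((z - z₀) * v z) ^ n ∧ z ∈ Φ.source := by
      filter_upwards [hG.mem_nhds hz₀G, hfa.continuousAt.eventually_ne hc, hhu, hvpow,
        Φ.open_source.mem_nhds hz₀src] with z h1 h2 h3 h4 h5
      refine ⟨h1, h2, ?_, h5⟩
      rw [h3, smul_eq_mul, mul_pow, h4]
    obtain ⟨W, hW1, hW2, hW3⟩ := _root_.eventually_nhds_iff.mp hev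
    have hWsrc : W ⊆ Φ.source := fun z hz => (hW1 z hz).2.2.2
    have hΦz₀ : Φ z₀ = 0 := by rw [hΦcoe]; simp
    have himg : IsOpen (Φ '' W) := Φ.isOpen_image_of_subset_source hW2 hWsrc
    have h0img : (0 : ℂ) ∈ Φ '' W := ⟨z₀, hW3, hΦz₀⟩
    obtain ⟨ρ, hρ0, hρ⟩ := Metric.isOpen_iff.mp himg 0 h0img
    refine ⟨W ∩ Φ ⁻¹' Metric.ball 0 ρ,
      (Φ.continuousOn.mono hWsrc).isOpen_inter_preimage hW2 Metric.isOpen_ball,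
      ⟨hW3, by simp [hΦz₀, hρ0]⟩, fun z hz => (hW1 z hz.1).1, ?_⟩
    have hset : {z ∈ G | ‖f z‖ = ε} ∩ (W ∩ Φ ⁻¹' Metric.ball 0 ρ) =
        Φ.symm '' {w : ℂ | w ∈ Metric.ball (0 : ℂ) ρ ∧ (w ^ n).re = 0} := by
      apply Set.Subset.antisymm
      · rintro z ⟨⟨hzG, hzε⟩, hzW, hzb⟩
        obtain ⟨-, hfz, hhz, -⟩ := hW1 z hzW
        refine ⟨Φ z, ⟨hzb, ?_⟩, Φ.left_inv (hWsrc hzW)⟩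
        have : (h z).re = 0 := (key z hfz).mp hzε
        rw [hΦcoe]
        simp only
        rw [← hhz]
        exact this
      · rintro x ⟨w, ⟨hwb, hwre⟩, rfl⟩
        obtain ⟨z, hzW, hzw⟩ := hρ hwb
        have hsymm : Φ.symm w = z := by rw [← hzw, Φ.left_inv (hWsrc hzW)]
        rw [hsymm]
        obtain ⟨hzG, hfz, hhz, -⟩ := hW1 z hzW
        refine ⟨⟨hzG, (key z hfz).mpr ?_⟩, hzW, by rw [Set.mem_preimage, hzw]; exact hwb⟩
        rw [hhz]
        have : ((z - z₀) * v z) ^ n = w ^ n := by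
          rw [← hzw, hΦcoe]
        rw [this, hwre]
    rw [hset]
    apply (star_preconn n hn0 ρ).image
    apply Φ.continuousOn_symm.mono
    rintro w ⟨hwb, -⟩
    obtain ⟨z, hzW, rfl⟩ := hρ hwb
    exact Φ.map_source (hWsrc hzW)

/-- If `G ⊆ ℂ` is bounded, open and connected, `f` is holomorphic and nonconstant on an
open set containing `cl G`, `ε > 0`, and the level set `E = {z ∈ G | |f z| = ε}` satisfies
`cl E ⊆ G` (no component of it meets `∂G`), then `E` has finitely many connected
components. -/
theorem stmt9 (G U : Set ℂ) (hG : IsOpen G) (hGc : IsConnected G)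
    (hGb : Bornology.IsBounded G) (hU : IsOpen U) (hUG : closure G ⊆ U)
    (f : ℂ → ℂ) (hf : DifferentiableOn ℂ f U) (hnc : ¬ ∃ c : ℂ, ∀ z ∈ U, f z = c)
    (ε : ℝ) (hε : 0 < ε)
    (hsep : closure {z ∈ G | ‖f z‖ = ε} ⊆ G) :
    {C : Set ℂ | ∃ z ∈ {z ∈ G | ‖f z‖ = ε},
      C = connectedComponentIn {z ∈ G | ‖f z‖ = ε} z}.Finite := by
  set E : Set ℂ := {z ∈ G | ‖f z‖ = ε} with hEdef
  have hGU : G ⊆ U := fun z hz => hUG (subset_closure hz)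
  -- E is closed
  have hEc : IsClosed E := by
    apply isClosed_of_closure_subset
    intro w hw
    have hwG : w ∈ G := hsep hw
    have hfc : ContinuousAt (fun z => ‖f z‖) w :=
      continuous_norm.continuousAt.comp
        (hf.continuousOn.continuousAt (hU.mem_nhds (hGU hwG)))
    have h1 : ‖f w‖ ∈ closure ((fun z => ‖f z‖) '' E) :=
      mem_closure_image hfc hw
    have h2 : (fun z => ‖f z‖) '' E ⊆ {ε} := by
      rintro x ⟨z, hz, rfl⟩
      exact hz.2
    have h3 := (closure_minimal h2 isClosed_singleton) h1
    exact ⟨hwG, h3⟩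
  have hEcpt : IsCompact E :=
    Metric.isCompact_of_isClosed_isBounded hEc (hGb.subset (Set.sep_subset _ _))
  -- local connectivity
  have hloc : ∀ z ∈ E, ∃ N : Set ℂ, IsOpen N ∧ z ∈ N ∧ N ⊆ G ∧ IsPreconnected (E ∩ N) :=
    fun z hz => local_conn hG hε (hf.analyticAt (hU.mem_nhds (hGU hz.1))) hz.1 hz.2
  choose! N hNo hNm hNs hNc using hloc
  obtain ⟨t, ht⟩ := hEcpt.elim_finite_subcover (fun i : E => N ↑i)
    (fun i => hNo i i.2) (fun z hz => Set.mem_iUnion.mpr ⟨⟨z, hz⟩, hNm z hz⟩)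
  have hfin : ((fun i : ↥E => connectedComponentIn E ↑i) '' ↑t).Finite :=
    Set.Finite.image _ t.finite_toSet
  apply Set.Finite.subset hfin
  rintro C ⟨w, hwE, rfl⟩
  have hwcov := ht hwE
  simp only [Set.mem_iUnion] at hwcov
  obtain ⟨i, hit, hwN⟩ := hwcov
  have hSconn : IsPreconnected (E ∩ N ↑i) := hNc i i.2
  have hsub : E ∩ N ↑i ⊆ connectedComponentIn E w :=
    hSconn.subset_connectedComponentIn ⟨hwE, hwN⟩ Set.inter_subset_left
  have heq : connectedComponentIn E w = connectedComponentIn E ↑i :=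
    connectedComponentIn_eq (hsub ⟨i.2, hNm i i.2⟩)
  exact ⟨i, hit, heq.symm⟩
end

section
/- Let p(z) = z^n − 1 for n ≥ 2 and let ε ∈ (1, ∞). Then the level set {z ∈ ℂ : |z^n − 1| = ε} is connected. -/
/-- For `n ≥ 2` and `ε > 1`, the level set `{z : |zⁿ - 1| = ε}` is connected. -/
theorem stmt18 (n : ℕ) (hn : 2 ≤ n) (ε : ℝ) (hε : 1 < ε) :
    IsConnected {z : ℂ | ‖z ^ n - 1‖ = ε} := by
  have hn0 : n ≠ 0 := by omega
  have hε0 : (0:ℝ) < ε := by linarith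
  have hε1 : (0:ℝ) < ε ^ 2 - 1 := by nlinarith
  set R : ℝ → ℝ := fun t => Real.cos t + Real.sqrt (Real.cos t ^ 2 + (ε ^ 2 - 1)) with hRdef
  have hsq : ∀ t : ℝ, Real.sqrt (Real.cos t ^ 2 + (ε ^ 2 - 1)) ^ 2
      = Real.cos t ^ 2 + (ε ^ 2 - 1) := by
    intro t
    exact Real.sq_sqrt (by positivity)
  have habslt : ∀ t : ℝ, |Real.cos t| < Real.sqrt (Real.cos t ^ 2 + (ε ^ 2 - 1)) := by
    intro t
    rw [← Real.sqrt_sq_eq_abs]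
    exact Real.sqrt_lt_sqrt (sq_nonneg _) (by linarith)
  have hRpos : ∀ t, 0 < R t := by
    intro t
    have h1 := habslt t
    have h2 := neg_abs_le (Real.cos t)
    simp only [hRdef]
    linarith
  have hRsq : ∀ t, R t ^ 2 - 2 * R t * Real.cos t + 1 = ε ^ 2 := by
    intro t
    have h1 := hsq t
    simp only [hRdef]
    nlinarith [h1]
  have hRuniq : ∀ t r, 0 < r → r ^ 2 - 2 * r * Real.cos t + 1 = ε ^ 2 → r = R t := by
    intro t r hr h
    have h1 := hsq t
    have h2 := habslt t
    have h3 := abs_le.mp (le_of_lt h2)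
    have hfac : (r - R t) * (r - (Real.cos t - Real.sqrt (Real.cos t ^ 2 + (ε ^ 2 - 1)))) = 0 := by
      simp only [hRdef]
      nlinarith [h1]
    rcases mul_eq_zero.mp hfac with h4 | h4
    · linarith
    · exfalso; linarith
  -- key absolute value computation
  have habs_iff : ∀ (r θ : ℝ), 0 ≤ r →
      (‖(r : ℂ) * Complex.exp (θ * Complex.I) - 1‖ = ε ↔
        r ^ 2 - 2 * r * Real.cos θ + 1 = ε ^ 2) := by
    intro r θ hr
    have hexp : Complex.exp (θ * Complex.I)
        = (Real.cos θ : ℂ) + (Real.sin θ : ℂ) * Complex.I := by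
      rw [Complex.exp_mul_I, Complex.ofReal_cos, Complex.ofReal_sin]
    have hns : Complex.normSq ((r : ℂ) * Complex.exp (θ * Complex.I) - 1)
        = r ^ 2 - 2 * r * Real.cos θ + 1 := by
      rw [hexp]
      simp [Complex.normSq_apply, Complex.cos_ofReal_re, Complex.sin_ofReal_re]
      nlinarith [Real.sin_sq_add_cos_sq θ]
    have h2 : ‖(r : ℂ) * Complex.exp (θ * Complex.I) - 1‖ ^ 2
        = r ^ 2 - 2 * r * Real.cos θ + 1 := by
      rw [Complex.sq_norm, hns]
    constructor
    · intro h; rw [← h2, h]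
    · intro h
      have h3 : ‖(r : ℂ) * Complex.exp (θ * Complex.I) - 1‖ ^ 2 = ε ^ 2 := by
        rw [h2, h]
      have h4 := norm_nonneg ((r : ℂ) * Complex.exp (θ * Complex.I) - 1)
      nlinarith [h3, h4]
  -- the parametrization
  set g : ℝ → ℂ := fun θ => ((R (n * θ)) ^ ((n : ℝ)⁻¹) : ℝ) * Complex.exp (θ * Complex.I)
    with hgdef
  have hgc : Continuous g := by
    apply Continuous.mul
    · apply Complex.continuous_ofReal.comp
      apply Continuous.rpow_const
      · apply Continuous.add
        · exact Real.continuous_cos.comp (continuous_const.mul continuous_id)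
        · exact Real.continuous_sqrt.comp (by fun_prop)
      · intro x; exact Or.inr (by positivity)
    · exact Complex.continuous_exp.comp (by fun_prop)
  have hgn : ∀ θ : ℝ, g θ ^ n = ((R (n * θ) : ℝ) : ℂ) * Complex.exp ((n * θ : ℝ) * Complex.I) := by
    intro θ
    simp only [hgdef]
    rw [mul_pow, ← Complex.ofReal_pow, Real.rpow_inv_natCast_pow (le_of_lt (hRpos _)) hn0,
      ← Complex.exp_nat_mul]
    push_cast
    ring_nf
  have hset : {z : ℂ | ‖z ^ n - 1‖ = ε} = Set.range g := by
    ext z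
    simp only [Set.mem_setOf_eq, Set.mem_range]
    constructor
    · intro hz
      have hz0 : z ≠ 0 := by
        intro h
        rw [h, zero_pow hn0] at hz
        simp at hz
        linarith
      refine ⟨Complex.arg z, ?_⟩
      have hρ : 0 < ‖z‖ := norm_pos_iff.mpr hz0
      have hzeq : ((‖z‖ : ℝ) : ℂ) * Complex.exp (Complex.arg z * Complex.I) = z :=
        Complex.norm_mul_exp_arg_mul_I z
      have hzn : z ^ n = ((‖z‖ ^ n : ℝ) : ℂ)
          * Complex.exp ((n * Complex.arg z : ℝ) * Complex.I) := by
        conv_lhs => rw [← hzeq]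
        rw [mul_pow, ← Complex.ofReal_pow, ← Complex.exp_nat_mul]
        push_cast
        ring_nf
      rw [hzn] at hz
      have hq := (habs_iff (‖z‖ ^ n) (n * Complex.arg z) (le_of_lt (pow_pos hρ n))).mp hz
      have hr : ‖z‖ ^ n = R (n * Complex.arg z) :=
        hRuniq _ _ (pow_pos hρ n) hq
      simp only [hgdef]
      rw [← hr, Real.pow_rpow_inv_natCast (le_of_lt hρ) hn0]
      exact hzeq
    · rintro ⟨θ, rfl⟩
      rw [hgn θ]
      exact (habs_iff _ _ (le_of_lt (hRpos _))).mpr (hRsq _)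
  rw [hset]
  exact isConnected_range hgc
end
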